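/- arXiv:2011.01325 — 6 statements merged into one kernel-verified Lean document; each statement's English description precedes it below -/
import Mathlib

section
/- Under Assumption S*, let (x,α) ↦ w_α(x) be a Borel measurable function from 𝕏×[0,+∞) to [0,+∞] such that for each x ∈ 𝕏 the function α ↦ w_α(x) is nondecreasing and lower semi-continuous. Then the function (x,a,α) ↦ η^α_{w_α}(x,a) is nonnegative and Borel measurable on Gr(A)×[0,+∞); for each x ∈ 𝕏 and α ≥ 0 the function a ↦ η^α_{w_α}(x,a) is inf-compact on A(x); for each (x,a) ∈ Gr(A) the function α ↦ η^α_{w_α}(x,a) is nondecreasing; and for each x ∈ 𝕏 the function (α,a) ↦ η^α_{w_α}(x,a) is 𝕂-inf-compact on [0,+∞)×A(x). -/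
open MeasureTheory Set Filter Topology
open scoped NNReal ENNReal

private lemma enn_le_of_forall_lt {b t : ℝ≥0∞} (h : ∀ y, y < b → y ≤ t) : b ≤ t := by
  by_contra hbt
  push_neg at hbt
  obtain ⟨y, hty, hyb⟩ := exists_between hbt
  exact absurd (h y hyb) (not_le.mpr hty)

/-- The optimality-operator integrand
`η^α_w(x,a) := c(x,a) + α ∫ w(z) q(dz|x,a)` of an MDP. -/
noncomputable def eta {X A : Type*} [MeasurableSpace X] (c : X → A → ℝ≥0∞)
    (q : X → A → Measure X) (w : X → ℝ≥0∞) (α : ℝ≥0) (x : X) (a : A) : ℝ≥0∞ :=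
  c x a + (α : ℝ≥0∞) * ∫⁻ z, w z ∂(q x a)

/-- Lemma 3.2(i,ii): Under Assumption S*, for a Borel measurable
`(x,α) ↦ w_α(x)` from `𝕏×[0,∞)` to `[0,∞]`, nondecreasing and l.s.c. in `α`:
`(x,a,α) ↦ η^α_{w_α}(x,a)` is (nonnegative and) Borel measurable on `Gr(A)×[0,∞)`;
for each `x` and `α ≥ 0`, `a ↦ η^α_{w_α}(x,a)` is inf-compact on `Act x`;
for each `(x,a) ∈ Gr(A)`, `α ↦ η^α_{w_α}(x,a)` is nondecreasing;
and for each `x`, `(α,a) ↦ η^α_{w_α}(x,a)` is 𝕂-inf-compact on `[0,∞) × Act x`. -/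
theorem stmt4 {X A : Type*}
    [MeasurableSpace X] [StandardBorelSpace X]
    [MetricSpace A] [MeasurableSpace A] [BorelSpace A] [StandardBorelSpace A]
    -- the MDP: strict action map with Borel graph admitting a Borel selector,
    -- Borel one-step costs, regular transition probabilities
    (Act : X → Set A) (hstrict : ∀ x, (Act x).Nonempty)
    (hGr : MeasurableSet {p : X × A | p.2 ∈ Act p.1})
    (hsel : ∃ φ : X → A, Measurable φ ∧ ∀ x, φ x ∈ Act x)
    (c : X → A → ℝ≥0∞)
    (hc : Measurable ({p : X × A | p.2 ∈ Act p.1}.restrict fun p => c p.1 p.2))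
    (q : X → A → Measure X)
    (hqp : ∀ x, ∀ a ∈ Act x, IsProbabilityMeasure (q x a))
    (hqm : ∀ B : Set X, MeasurableSet B →
      Measurable ({p : X × A | p.2 ∈ Act p.1}.restrict fun p => q p.1 p.2 B))
    -- Assumption S*(i): inf-compactness of the cost in the action
    (hS1 : ∀ x, ∀ r : ℝ, IsCompact {a ∈ Act x | c x a ≤ ENNReal.ofReal r})
    -- Assumption S*(ii): setwise continuity of the transition probability in the action
    (hS2 : ∀ x, ∀ f : X → ℝ, Measurable f → (∃ C : ℝ, ∀ z, |f z| ≤ C) →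
      ContinuousOn (fun a => ∫ z, f z ∂(q x a)) (Act x))
    (w : ℝ≥0 → X → ℝ≥0∞)
    (hw_meas : Measurable fun p : X × ℝ≥0 => w p.2 p.1)
    (hw_mono : ∀ x, Monotone fun α => w α x)
    (hw_lsc : ∀ x, LowerSemicontinuous fun α => w α x) :
    Measurable ({p : (X × A) × ℝ≥0 | p.1.2 ∈ Act p.1.1}.restrict
        fun p => eta c q (w p.2) p.2 p.1.1 p.1.2) ∧
    (∀ x, ∀ α : ℝ≥0, ∀ r : ℝ,
      IsCompact {a ∈ Act x | eta c q (w α) α x a ≤ ENNReal.ofReal r}) ∧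
    (∀ x, ∀ a ∈ Act x, Monotone fun α => eta c q (w α) α x a) ∧
    (∀ x, ∀ K : Set ℝ≥0, IsCompact K → ∀ r : ℝ,
      IsCompact {p : ℝ≥0 × A | p.1 ∈ K ∧ p.2 ∈ Act x ∧
        eta c q (w p.1) p.1 x p.2 ≤ ENNReal.ofReal r}) := by
  classical
  -- measurable sections of `w`
  have hwsec : ∀ β : ℝ≥0, Measurable fun z => w β z := fun β =>
    hw_meas.comp (measurable_id.prodMk measurable_const)
  -- continuity on `Act x` of truncated lower integrals
  have key_cont : ∀ x : X, ∀ g : X → ℝ≥0∞, Measurable g → ∀ m : ℕ,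
      (∀ z, g z ≤ (m : ℝ≥0∞)) →
      ContinuousOn (fun a => ∫⁻ z, g z ∂(q x a)) (Act x) := by
    intro x g hg m hgm
    have hf : Measurable fun z => (g z).toReal := hg.ennreal_toReal
    have hbd : ∀ z, |(g z).toReal| ≤ (m : ℝ) := by
      intro z
      rw [abs_of_nonneg ENNReal.toReal_nonneg]
      have h1 := ENNReal.toReal_mono (by simp) (hgm z)
      simpa using h1
    have hcont := hS2 x _ hf ⟨m, hbd⟩
    refine (ENNReal.continuous_ofReal.comp_continuousOn hcont).congr ?_
    intro a ha
    haveI := hqp x a ha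
    have hint : Integrable (fun z => (g z).toReal) (q x a) :=
      ⟨hf.aestronglyMeasurable,
        HasFiniteIntegral.of_bounded (C := (m : ℝ)) (ae_of_all _ fun z => hbd z)⟩
    have hne : ∀ z, g z ≠ ⊤ := fun z => ne_top_of_le_ne_top (by simp) (hgm z)
    calc ∫⁻ z, g z ∂(q x a)
        = ∫⁻ z, ENNReal.ofReal ((g z).toReal) ∂(q x a) :=
          lintegral_congr fun z => (ENNReal.ofReal_toReal (hne z)).symm
      _ = ENNReal.ofReal (∫ z, (g z).toReal ∂(q x a)) :=
          (MeasureTheory.ofReal_integral_eq_lintegral_ofReal hint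
            (ae_of_all _ fun z => ENNReal.toReal_nonneg)).symm
  -- sequential lower semicontinuity of `c x ·` on `Act x`
  have c_ev : ∀ x : X, ∀ a : A, ∀ s : ℕ → A, (∀ n, s n ∈ Act x) →
      Tendsto s atTop (𝓝 a) → ∀ y : ℝ≥0∞, y < c x a →
      ∀ᶠ n in atTop, y < c x (s n) := by
    intro x a s hsmem hst y hy
    have hyt : y ≠ ⊤ := ne_top_of_lt hy
    have hcpt := hS1 x y.toReal
    rw [ENNReal.ofReal_toReal hyt] at hcpt
    have hclosed : IsClosed {a' ∈ Act x | c x a' ≤ y} := hcpt.isClosed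
    have hna : a ∈ {a' ∈ Act x | c x a' ≤ y}ᶜ := fun h => absurd h.2 (not_le.mpr hy)
    have hev : ∀ᶠ n in atTop, s n ∈ {a' ∈ Act x | c x a' ≤ y}ᶜ :=
      hst.eventually (hclosed.isOpen_compl.mem_nhds hna)
    filter_upwards [hev] with n hn
    exact not_le.mp fun hle => hn ⟨hsmem n, hle⟩
  -- Part 4: K-inf-compactness
  have part4 : ∀ x, ∀ K : Set ℝ≥0, IsCompact K → ∀ r : ℝ,
      IsCompact {p : ℝ≥0 × A | p.1 ∈ K ∧ p.2 ∈ Act x ∧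
        eta c q (w p.1) p.1 x p.2 ≤ ENNReal.ofReal r} := by
    intro x K hK r
    have hKc := hS1 x r
    have hsub : {p : ℝ≥0 × A | p.1 ∈ K ∧ p.2 ∈ Act x ∧
        eta c q (w p.1) p.1 x p.2 ≤ ENNReal.ofReal r} ⊆
        K ×ˢ {a ∈ Act x | c x a ≤ ENNReal.ofReal r} := by
      rintro ⟨α, a⟩ ⟨h1, h2, h3⟩
      exact ⟨h1, h2, le_trans (self_le_add_right _ _) h3⟩
    refine IsCompact.of_isClosed_subset (hK.prod hKc) (IsSeqClosed.isClosed ?_) hsub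
    intro s p hsE hsp
    have hα : Tendsto (fun n => (s n).1) atTop (𝓝 p.1) :=
      (continuous_fst.tendsto p).comp hsp
    have ha : Tendsto (fun n => (s n).2) atTop (𝓝 p.2) :=
      (continuous_snd.tendsto p).comp hsp
    have hsE' : ∀ n, c x (s n).2 + ((s n).1 : ℝ≥0∞) *
        ∫⁻ z, w (s n).1 z ∂(q x (s n).2) ≤ ENNReal.ofReal r := fun n => (hsE n).2.2
    have hmemK : p.1 ∈ K :=
      hK.isClosed.mem_of_tendsto hα (Eventually.of_forall fun n => (hsE n).1)
    have hmemKc : p.2 ∈ {a ∈ Act x | c x a ≤ ENNReal.ofReal r} :=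
      hKc.isClosed.mem_of_tendsto ha (Eventually.of_forall fun n =>
        ⟨(hsE n).2.1, le_trans (self_le_add_right _ _) (hsE' n)⟩)
    have haAct : p.2 ∈ Act x := hmemKc.1
    refine ⟨hmemK, haAct, ?_⟩
    have ha' : Tendsto (fun n => (s n).2) atTop (𝓝[Act x] p.2) :=
      tendsto_nhdsWithin_iff.mpr ⟨ha, Eventually.of_forall fun n => (hsE n).2.1⟩
    -- Step A
    have stepA : ∀ β : ℝ≥0, β < p.1 → ∀ m : ℕ,
        c x p.2 + (β : ℝ≥0∞) * ∫⁻ z, min (w β z) m ∂(q x p.2) ≤ ENNReal.ofReal r := by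
      intro β hβ m
      have hgmeas : Measurable fun z => min (w β z) (m : ℝ≥0∞) :=
        (hwsec β).min measurable_const
      have hgbd : ∀ z, min (w β z) (m : ℝ≥0∞) ≤ (m : ℝ≥0∞) := fun z => min_le_right _ _
      have hVt : Tendsto (fun n => ∫⁻ z, min (w β z) m ∂(q x (s n).2)) atTop
          (𝓝 (∫⁻ z, min (w β z) m ∂(q x p.2))) :=
        ((key_cont x _ hgmeas m hgbd) p.2 haAct).tendsto.comp ha'
      have hβev : ∀ᶠ n in atTop, β ≤ (s n).1 :=
        (hα.eventually (eventually_gt_nhds hβ)).mono fun n hn => hn.le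
      have hub : ∀ᶠ n in atTop,
          c x (s n).2 + (β : ℝ≥0∞) * ∫⁻ z, min (w β z) m ∂(q x (s n).2) ≤
            ENNReal.ofReal r := by
        filter_upwards [hβev] with n hn
        refine le_trans (add_le_add le_rfl (mul_le_mul' (ENNReal.coe_le_coe.mpr hn)
          (lintegral_mono fun z => le_trans (min_le_left _ _) (hw_mono z hn)))) (hsE' n)
      have hβVle : (β : ℝ≥0∞) * ∫⁻ z, min (w β z) m ∂(q x p.2) ≤ ENNReal.ofReal r := by
        refine le_of_tendsto (ENNReal.Tendsto.const_mul hVt (Or.inr ENNReal.coe_ne_top)) ?_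
        filter_upwards [hub] with n hn
        exact le_trans le_add_self hn
      rcases eq_or_ne (c x p.2) 0 with hc0 | hc0
      · rw [hc0, zero_add]; exact hβVle
      · have hforall : ∀ y ∈ Iio (c x p.2),
            y + (β : ℝ≥0∞) * ∫⁻ z, min (w β z) m ∂(q x p.2) ≤ ENNReal.ofReal r := by
          intro y hy
          have hev := c_ev x p.2 _ (fun n => (hsE n).2.1) ha y hy
          refine le_of_tendsto (Tendsto.const_add y
            (ENNReal.Tendsto.const_mul hVt (Or.inr ENNReal.coe_ne_top))) ?_
          filter_upwards [hev, hub] with n h1 h2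
          exact le_trans (add_le_add h1.le le_rfl) h2
        calc c x p.2 + (β : ℝ≥0∞) * ∫⁻ z, min (w β z) m ∂(q x p.2)
            = sSup (Iio (c x p.2)) + (β : ℝ≥0∞) * ∫⁻ z, min (w β z) m ∂(q x p.2) := by
              rw [isLUB_Iio.sSup_eq]
          _ = ⨆ y ∈ Iio (c x p.2),
              (y + (β : ℝ≥0∞) * ∫⁻ z, min (w β z) m ∂(q x p.2)) :=
              ENNReal.sSup_add ⟨0, pos_iff_ne_zero.mpr hc0⟩
          _ ≤ ENNReal.ofReal r := iSup₂_le hforall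
    -- Step B
    rcases eq_or_ne p.1 0 with h0 | h0
    · show c x p.2 + (p.1 : ℝ≥0∞) * ∫⁻ z, w p.1 z ∂(q x p.2) ≤ ENNReal.ofReal r
      rw [h0]
      simpa using hmemKc.2
    · obtain ⟨u, hu_mono, hu_mem, hu_t⟩ :=
        exists_seq_strictMono_tendsto' (pos_iff_ne_zero.mpr h0)
      have hgmono : ∀ z, Monotone fun k : ℕ => min (w (u k) z) (k : ℝ≥0∞) := by
        intro z i j hij
        exact min_le_min (hw_mono z (hu_mono.monotone hij)) (Nat.cast_le.mpr hij)
      have hgsup : ∀ z, (⨆ k : ℕ, min (w (u k) z) (k : ℝ≥0∞)) = w p.1 z := by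
        intro z
        refine le_antisymm (iSup_le fun k =>
          le_trans (min_le_left _ _) (hw_mono z (hu_mem k).2.le)) ?_
        refine enn_le_of_forall_lt fun y hy => ?_
        have h1 : ∀ᶠ k in atTop, y < w (u k) z := hu_t.eventually ((hw_lsc z) p.1 y hy)
        obtain ⟨nk, hnk⟩ := ENNReal.exists_nat_gt (ne_top_of_lt hy)
        have h2 : ∀ᶠ k : ℕ in atTop, y < (k : ℝ≥0∞) :=
          eventually_atTop.mpr ⟨nk, fun k hk => hnk.trans_le (by exact_mod_cast hk)⟩
        obtain ⟨k, hk1, hk2⟩ := (h1.and h2).exists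
        exact le_trans (lt_min hk1 hk2).le (le_iSup (fun k : ℕ => min (w (u k) z) k) k)
      have hVmono : Monotone fun k : ℕ => ∫⁻ z, min (w (u k) z) k ∂(q x p.2) :=
        fun i j hij => lintegral_mono fun z => hgmono z hij
      have hVt : Tendsto (fun k : ℕ => ∫⁻ z, min (w (u k) z) k ∂(q x p.2)) atTop
          (𝓝 (∫⁻ z, w p.1 z ∂(q x p.2))) := by
        have h1 := tendsto_atTop_iSup hVmono
        rwa [show (⨆ k : ℕ, ∫⁻ z, min (w (u k) z) k ∂(q x p.2)) =
            ∫⁻ z, w p.1 z ∂(q x p.2) from by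
          rw [← lintegral_iSup (fun k => (hwsec (u k)).min measurable_const)
            (fun i j hij z => hgmono z hij)]
          exact lintegral_congr fun z => hgsup z] at h1
      have hfinal : Tendsto
          (fun k : ℕ => c x p.2 + (u k : ℝ≥0∞) * ∫⁻ z, min (w (u k) z) k ∂(q x p.2))
          atTop (𝓝 (c x p.2 + (p.1 : ℝ≥0∞) * ∫⁻ z, w p.1 z ∂(q x p.2))) := by
        refine Tendsto.const_add _ (ENNReal.Tendsto.mul (ENNReal.tendsto_coe.mpr hu_t)
          (Or.inl (ENNReal.coe_ne_zero.mpr h0)) hVt (Or.inr ENNReal.coe_ne_top))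
      exact le_of_tendsto hfinal
        (Eventually.of_forall fun k => stepA (u k) (hu_mem k).2 k)
  -- Part 1: measurability
  have part1 : Measurable ({p : (X × A) × ℝ≥0 | p.1.2 ∈ Act p.1.1}.restrict
      fun p => eta c q (w p.2) p.2 p.1.1 p.1.2) := by
    set S' : Set ((X × A) × ℝ≥0) := {p : (X × A) × ℝ≥0 | p.1.2 ∈ Act p.1.1} with hS'
    have hj : Measurable fun p : S' =>
        (⟨p.val.1, p.prop⟩ : {p : X × A | p.2 ∈ Act p.1}) :=
      (measurable_fst.comp measurable_subtype_coe).subtype_mk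
    let κ0 : ProbabilityTheory.Kernel {p : X × A | p.2 ∈ Act p.1} X :=
      { toFun := fun t => q t.val.1 t.val.2
        measurable' := Measure.measurable_of_measurable_coe _ fun B hB => hqm B hB }
    haveI : ProbabilityTheory.IsMarkovKernel κ0 := ⟨fun t => hqp _ _ t.prop⟩
    let κ : ProbabilityTheory.Kernel S' X :=
      κ0.comap (fun p : S' => (⟨p.val.1, p.prop⟩ : {p : X × A | p.2 ∈ Act p.1})) hj
    have huncurry : Measurable (Function.uncurry fun (p : S') (z : X) => w p.val.2 z) :=
      hw_meas.comp (measurable_snd.prodMk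
        ((measurable_snd.comp measurable_subtype_coe).comp measurable_fst))
    have hint : Measurable fun p : S' => ∫⁻ z, w p.val.2 z ∂(q p.val.1.1 p.val.1.2) := by
      have h1 : Measurable fun p : S' => ∫⁻ z, w p.val.2 z ∂(κ p) :=
        Measurable.lintegral_kernel_prod_right huncurry
      exact h1
    have hcm : Measurable fun p : S' => c p.val.1.1 p.val.1.2 := hc.comp hj
    have hαm : Measurable fun p : S' => (p.val.2 : ℝ≥0∞) :=
      measurable_coe_nnreal_ennreal.comp (measurable_snd.comp measurable_subtype_coe)
    exact hcm.add (hαm.mul hint)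
  -- Part 2: inf-compactness in the action
  have part2 : ∀ x, ∀ α : ℝ≥0, ∀ r : ℝ,
      IsCompact {a ∈ Act x | eta c q (w α) α x a ≤ ENNReal.ofReal r} := by
    intro x α r
    have h4 := part4 x {α} isCompact_singleton r
    have himg : {a ∈ Act x | eta c q (w α) α x a ≤ ENNReal.ofReal r} =
        Prod.snd '' {p : ℝ≥0 × A | p.1 ∈ ({α} : Set ℝ≥0) ∧ p.2 ∈ Act x ∧
          eta c q (w p.1) p.1 x p.2 ≤ ENNReal.ofReal r} := by
      ext a
      constructor
      · rintro ⟨h1, h2⟩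
        exact ⟨(α, a), ⟨rfl, h1, h2⟩, rfl⟩
      · rintro ⟨⟨β, b⟩, ⟨hβ, h1, h2⟩, rfl⟩
        cases hβ
        exact ⟨h1, h2⟩
    rw [himg]
    exact h4.image continuous_snd
  -- Part 3: monotonicity in α
  have part3 : ∀ x, ∀ a ∈ Act x, Monotone fun α => eta c q (w α) α x a := by
    intro x a _ α₁ α₂ h
    exact add_le_add le_rfl (mul_le_mul' (ENNReal.coe_le_coe.mpr h)
      (lintegral_mono fun z => hw_mono z h))
  exact ⟨part1, part2, part3, part4⟩
end

section
/- Under Assumption S*, let (x,α) ↦ w_α(x) be a Borel measurable function from 𝕏×[0,+∞) to [0,+∞] such that for each x ∈ 𝕏 the function α ↦ w_α(x) is nondecreasing and lower semi-continuous. Then for each x ∈ 𝕏 the function α ↦ w*_α(x) := inf_{a∈A(x)} η^α_{w_α}(x,a) is nondecreasing and lower semi-continuous on [0,+∞). -/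
open MeasureTheory Set Filter Topology
open scoped NNReal ENNReal

private lemma aux_liminf_add (u v : ℕ → ℝ≥0∞) :
    liminf u atTop + liminf v atTop ≤ liminf (fun n => u n + v n) atTop := by
  rw [liminf_eq_iSup_iInf_of_nat, liminf_eq_iSup_iInf_of_nat, liminf_eq_iSup_iInf_of_nat]
  refine ENNReal.iSup_add_iSup_le fun i j => ?_
  refine le_trans (le_iInf₂ fun k hk => add_le_add
    (iInf₂_le k (le_trans (le_max_left i j) hk))
    (iInf₂_le k (le_trans (le_max_right i j) hk)))
    (le_iSup (fun n => ⨅ i ≥ n, (u i + v i)) (max i j))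

private lemma aux_liminf_le_iSup (u : ℕ → ℝ≥0∞) : liminf u atTop ≤ ⨆ n, u n := by
  rw [liminf_eq_iSup_iInf_of_nat]
  exact iSup_mono fun n => iInf₂_le n (le_refl n)

private lemma aux_lsc_le_liminf {α : Type*} [TopologicalSpace α] {f : α → ℝ≥0∞} {a : α}
    (hf : LowerSemicontinuousAt f a) {b : ℕ → α} (hb : Tendsto b atTop (𝓝 a)) :
    f a ≤ liminf (fun n => f (b n)) atTop :=
  (le_liminf_iff (by isBoundedDefault) (by isBoundedDefault)).2
    fun y hy => hb.eventually (hf y hy)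

private lemma aux_iSup_min_natCast (v : ℝ≥0∞) : ⨆ k : ℕ, min v (k : ℝ≥0∞) = v := by
  apply le_antisymm (iSup_le fun k => min_le_left _ _)
  rcases eq_or_ne v ⊤ with rfl | h
  · calc (⊤:ℝ≥0∞) = ⨆ k : ℕ, (k:ℝ≥0∞) := ENNReal.iSup_natCast.symm
      _ ≤ ⨆ k : ℕ, min ⊤ (k:ℝ≥0∞) := iSup_mono fun k => le_min le_top le_rfl
  · obtain ⟨k, hk⟩ := ENNReal.exists_nat_gt h
    exact le_trans (le_of_eq (min_eq_left hk.le).symm)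
      (le_iSup (fun k : ℕ => min v (k:ℝ≥0∞)) k)
/-- Lemma 3.2(iv): Under Assumption S*, for a Borel measurable
`(x,α) ↦ w_α(x)` from `𝕏×[0,∞)` to `[0,∞]`, nondecreasing and l.s.c. in `α`, for each
`x ∈ 𝕏` the function `α ↦ w*_α(x) := inf_{a ∈ Act x} η^α_{w_α}(x,a)` is nondecreasing and
lower semi-continuous on `[0,∞)`. -/
theorem stmt6 {X A : Type*}
    [MeasurableSpace X] [StandardBorelSpace X]
    [MetricSpace A] [MeasurableSpace A] [BorelSpace A] [StandardBorelSpace A]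
    -- the MDP: strict action map with Borel graph admitting a Borel selector,
    -- Borel one-step costs, regular transition probabilities
    (Act : X → Set A) (hstrict : ∀ x, (Act x).Nonempty)
    (hGr : MeasurableSet {p : X × A | p.2 ∈ Act p.1})
    (hsel : ∃ φ : X → A, Measurable φ ∧ ∀ x, φ x ∈ Act x)
    (c : X → A → ℝ≥0∞)
    (hc : Measurable ({p : X × A | p.2 ∈ Act p.1}.restrict fun p => c p.1 p.2))
    (q : X → A → Measure X)
    (hqp : ∀ x, ∀ a ∈ Act x, IsProbabilityMeasure (q x a))
    (hqm : ∀ B : Set X, MeasurableSet B →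
      Measurable ({p : X × A | p.2 ∈ Act p.1}.restrict fun p => q p.1 p.2 B))
    -- Assumption S*(i): inf-compactness of the cost in the action
    (hS1 : ∀ x, ∀ r : ℝ, IsCompact {a ∈ Act x | c x a ≤ ENNReal.ofReal r})
    -- Assumption S*(ii): setwise continuity of the transition probability in the action
    (hS2 : ∀ x, ∀ f : X → ℝ, Measurable f → (∃ C : ℝ, ∀ z, |f z| ≤ C) →
      ContinuousOn (fun a => ∫ z, f z ∂(q x a)) (Act x))
    (w : ℝ≥0 → X → ℝ≥0∞)
    (hw_meas : Measurable fun p : X × ℝ≥0 => w p.2 p.1)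
    (hw_mono : ∀ x, Monotone fun α => w α x)
    (hw_lsc : ∀ x, LowerSemicontinuous fun α => w α x) :
    ∀ x, Monotone (fun α : ℝ≥0 => ⨅ a ∈ Act x, eta c q (w α) α x a) ∧
      LowerSemicontinuous (fun α : ℝ≥0 => ⨅ a ∈ Act x, eta c q (w α) α x a) := by
  intro x
  -- Monotonicity
  have hmono : Monotone (fun α : ℝ≥0 => ⨅ a ∈ Act x, eta c q (w α) α x a) := by
    intro α β hab
    refine iInf_mono fun a => iInf_mono fun _ => ?_
    simp only [eta]
    exact add_le_add le_rfl (mul_le_mul' (ENNReal.coe_le_coe.2 hab)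
      (lintegral_mono fun z => hw_mono z hab))
  refine ⟨hmono, ?_⟩
  -- measurability of each w β
  have hwmeas' : ∀ β : ℝ≥0, Measurable (w β) := fun β =>
    hw_meas.comp (measurable_id.prodMk measurable_const)
  -- the key left-continuity claim
  have key : ∀ α₀ : ℝ≥0, 0 < α₀ → ∀ y : ℝ≥0∞,
      y < (⨅ a ∈ Act x, eta c q (w α₀) α₀ x a) →
      ∃ β, β < α₀ ∧ y < (⨅ a ∈ Act x, eta c q (w β) β x a) := by
    intro α₀ hα₀ y hy
    classical
    by_contra hcon
    push_neg at hcon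
    have hyne : y ≠ ⊤ := ne_top_of_lt hy
    -- a strictly increasing sequence tending to α₀ from below
    obtain ⟨u, hu_smono, hu_mem, hu_tend⟩ := exists_seq_strictMono_tendsto' hα₀
    -- near-optimal actions
    have hchoice : ∀ n : ℕ, ∃ a, a ∈ Act x ∧
        eta c q (w (u n)) (u n) x a < y + ((n : ℝ≥0∞) + 1)⁻¹ := by
      intro n
      have h1 : y < y + ((n : ℝ≥0∞) + 1)⁻¹ :=
        ENNReal.lt_add_right hyne (by simp)
      have h2 := lt_of_le_of_lt (hcon _ (hu_mem n).2) h1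
      simpa [iInf_lt_iff] using h2
    choose b hbAct hblt using hchoice
    -- the actions stay in a compact set
    have hy1ne : y + 1 ≠ ⊤ := by finiteness
    have hofr : ENNReal.ofReal ((y + 1).toReal) = y + 1 := ENNReal.ofReal_toReal hy1ne
    have hbmem : ∀ n, b n ∈ {a ∈ Act x | c x a ≤ ENNReal.ofReal ((y + 1).toReal)} := by
      intro n
      refine ⟨hbAct n, ?_⟩
      rw [hofr]
      calc c x (b n) ≤ eta c q (w (u n)) (u n) x (b n) := by
            simp only [eta]; exact self_le_add_right _ _
        _ ≤ y + ((n : ℝ≥0∞) + 1)⁻¹ := (hblt n).le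
        _ ≤ y + 1 := add_le_add le_rfl (ENNReal.inv_le_one.2 (by simp))
    obtain ⟨a, haK, φ, hφ, hconv⟩ := (hS1 x ((y + 1).toReal)).tendsto_subseq hbmem
    have haAct : a ∈ Act x := haK.1
    set v : ℕ → ℝ≥0 := fun n => u (φ n) with hv
    set bb : ℕ → A := fun n => b (φ n) with hbb
    have hv_lt : ∀ n, v n < α₀ := fun n => (hu_mem (φ n)).2
    have hv_mono : Monotone v := fun m n h => (hu_smono.monotone) (hφ.monotone h)
    have hv_tend : Tendsto v atTop (𝓝 α₀) := hu_tend.comp hφ.tendsto_atTop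
    have hbbAct : ∀ n, bb n ∈ Act x := fun n => hbAct (φ n)
    -- liminf of values along the subsequence is ≤ y
    have heta_le : ∀ n, eta c q (w (v n)) (v n) x (bb n) ≤ y + ((n : ℝ≥0∞) + 1)⁻¹ := by
      intro n
      refine le_trans (hblt (φ n)).le (add_le_add le_rfl ?_)
      refine ENNReal.inv_le_inv.2 (add_le_add ?_ le_rfl)
      exact_mod_cast Nat.cast_le.2 hφ.le_apply
    have hliminf_le : liminf (fun n => eta c q (w (v n)) (v n) x (bb n)) atTop ≤ y := by
      have htend : Tendsto (fun n : ℕ => y + ((n : ℝ≥0∞) + 1)⁻¹) atTop (𝓝 y) := by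
        have h1 : Tendsto (fun n : ℕ => ((n : ℝ≥0∞) + 1)⁻¹) atTop (𝓝 0) := by
          have h := ENNReal.tendsto_inv_nat_nhds_zero.comp (tendsto_add_atTop_nat 1)
          refine h.congr fun n => ?_
          simp only [Function.comp]
          push_cast
          rfl
        simpa using tendsto_const_nhds.add h1
      calc liminf (fun n => eta c q (w (v n)) (v n) x (bb n)) atTop
          ≤ liminf (fun n : ℕ => y + ((n : ℝ≥0∞) + 1)⁻¹) atTop :=
            liminf_le_liminf (Eventually.of_forall heta_le)
        _ = y := htend.liminf_eq
    -- lower semicontinuity of the cost along the subsequence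
    have hclsc : c x a ≤ liminf (fun n => c x (bb n)) atTop := by
      set cc : A → ℝ≥0∞ := fun a' => if a' ∈ Act x then c x a' else ⊤ with hcc
      have hcc_lsc : LowerSemicontinuous cc := by
        rw [lowerSemicontinuous_iff_isClosed_preimage]
        intro t
        rcases eq_or_ne t ⊤ with rfl | ht
        · have : cc ⁻¹' Iic ⊤ = univ := by
            ext a'; simp
          rw [this]; exact isClosed_univ
        · have : cc ⁻¹' Iic t = {a' ∈ Act x | c x a' ≤ ENNReal.ofReal t.toReal} := by
            ext a'
            by_cases h : a' ∈ Act x <;>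
              simp [cc, h, ENNReal.ofReal_toReal ht, ht]
          rw [this]; exact (hS1 x _).isClosed
      have h1 := aux_lsc_le_liminf (hcc_lsc a) hconv
      have h2 : cc a = c x a := if_pos haAct
      rw [← h2]
      refine le_trans h1 (le_of_eq ?_)
      congr 1
      funext n
      exact if_pos (hbbAct n)
    -- the truncated-integral estimates
    have hmk : ∀ m k : ℕ,
        c x a + (v m : ℝ≥0∞) * ∫⁻ z, min (w (v m) z) (k : ℝ≥0∞) ∂(q x a) ≤ y := by
      intro m k
      set g : X → ℝ≥0∞ := fun z => min (w (v m) z) (k : ℝ≥0∞) with hg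
      have hg_meas : Measurable g := (hwmeas' (v m)).min measurable_const
      have hTbound : ∀ a' ∈ Act x, ∫⁻ z, g z ∂(q x a') ≠ ⊤ := by
        intro a' ha'
        have := hqp x a' ha'
        refine ne_top_of_le_ne_top (by finiteness : ((k:ℝ≥0∞)) ≠ ⊤) ?_
        calc ∫⁻ z, g z ∂(q x a') ≤ ∫⁻ _, (k : ℝ≥0∞) ∂(q x a') :=
              lintegral_mono fun z => min_le_right _ _
          _ = k := by simp
      have hint_eq : ∀ a' ∈ Act x,
          ∫ z, (g z).toReal ∂(q x a') = (∫⁻ z, g z ∂(q x a')).toReal := fun a' ha' =>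
        integral_toReal hg_meas.aemeasurable
          (ae_of_all _ fun z => lt_of_le_of_lt (min_le_right _ _)
            (ENNReal.natCast_lt_top k))
      have hf_meas : Measurable fun z => (g z).toReal :=
        ENNReal.measurable_toReal.comp hg_meas
      have hf_bdd : ∃ C : ℝ, ∀ z, |(g z).toReal| ≤ C := by
        refine ⟨k, fun z => ?_⟩
        rw [abs_of_nonneg ENNReal.toReal_nonneg]
        have := ENNReal.toReal_mono (ENNReal.natCast_ne_top k) (min_le_right (w (v m) z) (k:ℝ≥0∞))
        simpa using this
      have htendT : Tendsto (fun n => ∫⁻ z, g z ∂(q x (bb n))) atTop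
          (𝓝 (∫⁻ z, g z ∂(q x a))) := by
        have hcont := hS2 x _ hf_meas hf_bdd
        have h1 : Tendsto (fun n => ∫ z, (g z).toReal ∂(q x (bb n))) atTop
            (𝓝 (∫ z, (g z).toReal ∂(q x a))) :=
          (hcont a haAct).tendsto.comp
            (tendsto_nhdsWithin_iff.mpr ⟨hconv, Eventually.of_forall hbbAct⟩)
        rw [hint_eq a haAct] at h1
        have h2 : (fun n => ∫ z, (g z).toReal ∂(q x (bb n)))
            = fun n => (∫⁻ z, g z ∂(q x (bb n))).toReal :=
          funext fun n => hint_eq _ (hbbAct n)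
        rw [h2] at h1
        exact (ENNReal.tendsto_toReal_iff (fun n => hTbound _ (hbbAct n))
          (hTbound a haAct)).1 h1
      have hlow : ∀ n ≥ m, c x (bb n) + (v m : ℝ≥0∞) * ∫⁻ z, g z ∂(q x (bb n))
          ≤ eta c q (w (v n)) (v n) x (bb n) := by
        intro n hn
        simp only [eta]
        refine add_le_add le_rfl (mul_le_mul' (ENNReal.coe_le_coe.2 (hv_mono hn))
          (lintegral_mono fun z => le_trans (min_le_left _ _) (hw_mono z (hv_mono hn))))
      calc c x a + (v m : ℝ≥0∞) * ∫⁻ z, g z ∂(q x a)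
          ≤ liminf (fun n => c x (bb n)) atTop
            + liminf (fun n => (v m : ℝ≥0∞) * ∫⁻ z, g z ∂(q x (bb n))) atTop := by
            refine add_le_add hclsc (le_of_eq ?_)
            exact ((ENNReal.Tendsto.const_mul htendT
              (Or.inr ENNReal.coe_ne_top)).liminf_eq).symm
        _ ≤ liminf (fun n => c x (bb n)
              + (v m : ℝ≥0∞) * ∫⁻ z, g z ∂(q x (bb n))) atTop := aux_liminf_add _ _
        _ ≤ liminf (fun n => eta c q (w (v n)) (v n) x (bb n)) atTop := by
            refine liminf_le_liminf ?_
            filter_upwards [eventually_ge_atTop m] with n hn using hlow n hn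
        _ ≤ y := hliminf_le
    -- pointwise supremum identity for w
    have hsupw : ∀ z, ⨆ m, w (v m) z = w α₀ z := by
      intro z
      apply le_antisymm (iSup_le fun m => hw_mono z (hv_lt m).le)
      exact le_trans (aux_lsc_le_liminf (hw_lsc z α₀) hv_tend) (aux_liminf_le_iSup _)
    -- monotone convergence identities
    set S : ℕ → ℝ≥0∞ := fun m => ∫⁻ z, w (v m) z ∂(q x a) with hS
    have ha_int : ∫⁻ z, w α₀ z ∂(q x a) = ⨆ m, S m := by
      rw [← lintegral_iSup (fun m => hwmeas' (v m))
        (fun m1 m2 h z => hw_mono z (hv_mono h))]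
      exact lintegral_congr fun z => (hsupw z).symm
    have hS_eq : ∀ m, S m = ⨆ k : ℕ, ∫⁻ z, min (w (v m) z) (k : ℝ≥0∞) ∂(q x a) := by
      intro m
      rw [← lintegral_iSup (fun k => (hwmeas' (v m)).min measurable_const)
        (fun k1 k2 h z => min_le_min le_rfl (Nat.cast_le.2 h))]
      exact lintegral_congr fun z => (aux_iSup_min_natCast _).symm
    have hα₀sup : (α₀ : ℝ≥0∞) = ⨆ m, (v m : ℝ≥0∞) := by
      refine tendsto_nhds_unique (ENNReal.tendsto_coe.2 hv_tend) ?_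
      exact tendsto_atTop_iSup fun m1 m2 h => ENNReal.coe_le_coe.2 (hv_mono h)
    -- the main estimate
    have hmain : (α₀ : ℝ≥0∞) * ∫⁻ z, w α₀ z ∂(q x a)
        ≤ ⨆ m, ⨆ k : ℕ, (v m : ℝ≥0∞) * ∫⁻ z, min (w (v m) z) (k : ℝ≥0∞) ∂(q x a) := by
      rw [ha_int, ENNReal.mul_iSup]
      refine iSup_le fun m => ?_
      rw [hα₀sup, ENNReal.iSup_mul]
      refine iSup_le fun j => ?_
      refine le_trans ?_ (le_iSup _ (max m j))
      calc (v j : ℝ≥0∞) * S m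
          ≤ (v (max m j) : ℝ≥0∞) * ⨆ k : ℕ, ∫⁻ z, min (w (v (max m j)) z) (k : ℝ≥0∞) ∂(q x a) := by
            refine mul_le_mul' (ENNReal.coe_le_coe.2 (hv_mono (le_max_right m j))) ?_
            rw [hS_eq m]
            exact iSup_mono fun k => lintegral_mono fun z =>
              min_le_min (hw_mono z (hv_mono (le_max_left m j))) le_rfl
        _ = ⨆ k : ℕ, (v (max m j) : ℝ≥0∞) * ∫⁻ z, min (w (v (max m j)) z) (k : ℝ≥0∞) ∂(q x a) :=
            ENNReal.mul_iSup _ _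
    -- conclude
    have hfinal : c x a + (α₀ : ℝ≥0∞) * ∫⁻ z, w α₀ z ∂(q x a) ≤ y := by
      refine le_trans (add_le_add le_rfl hmain) ?_
      rw [ENNReal.add_iSup]
      refine iSup_le fun m => ?_
      rw [ENNReal.add_iSup]
      exact iSup_le fun k => hmk m k
    have : (⨅ a' ∈ Act x, eta c q (w α₀) α₀ x a') ≤ y :=
      le_trans (iInf₂_le a haAct) hfinal
    exact absurd hy (not_lt.2 this)
  -- deduce lower semicontinuity from monotonicity + left continuity
  intro α₀ y hy
  rcases eq_or_ne α₀ 0 with rfl | h0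
  · exact Eventually.of_forall fun β => lt_of_lt_of_le hy (hmono (zero_le : (0:ℝ≥0) ≤ β))
  · obtain ⟨β, hβlt, hβ⟩ := key α₀ (lt_of_le_of_ne zero_le (Ne.symm h0)) y hy
    filter_upwards [Ioi_mem_nhds hβlt] with β' hβ'
    exact lt_of_lt_of_le hβ (hmono (le_of_lt hβ'))
end

section
/- Under Assumption S*, let (x,α) ↦ w_α(x) be a Borel measurable function from 𝕏×[0,+∞) to [0,+∞] such that for each x ∈ 𝕏 the function α ↦ w_α(x) is nondecreasing and lower semi-continuous, and set w*_α(x) := inf_{a∈A(x)} η^α_{w_α}(x,a). Then the sets A*_α(x) := {a ∈ A(x) : η^α_{w_α}(x,a) = w*_α(x)} are nonempty for all (x,α) ∈ 𝕏×[0,+∞) and satisfy: (a) {(x,α,a) : a ∈ A*_α(x)} is a Borel subset of 𝕏×[0,+∞)×𝔸; (b) A*_α(x) = A(x) if w*_α(x) = +∞, and A*_α(x) is compact if w*_α(x) < +∞. -/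
open MeasureTheory Set Filter Topology
open scoped NNReal ENNReal

open PiNat ProbabilityTheory

/-- A countable family of sets is "measurably countably separated" if there are measurable
supersets with empty intersection. -/
def NSep {α : Type*} [MeasurableSpace α] (s : ℕ → Set α) : Prop :=
  ∃ B : ℕ → Set α, (∀ n, s n ⊆ B n) ∧ (∀ n, MeasurableSet (B n)) ∧ (⋂ n, B n) = ∅

lemma nsep_of_subsets {α : Type*} [MeasurableSpace α] {s t : ℕ → Set α}
    (h : ∀ n, s n ⊆ t n) (ht : NSep t) : NSep s := by
  obtain ⟨B, h1, h2, h3⟩ := ht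
  exact ⟨B, fun n => (h n).trans (h1 n), h2, h3⟩

lemma nsep_split {α : Type*} [MeasurableSpace α] (f : ℕ → (ℕ → ℕ) → α)
    (P : ℕ → (ℕ → ℕ) × ℕ) (n₀ : ℕ)
    (h : ¬ NSep (fun n => f n '' cylinder (P n).1 (P n).2)) :
    ∃ x', x' ∈ cylinder (P n₀).1 (P n₀).2 ∧
      ¬ NSep (fun n => f n '' cylinder ((Function.update P n₀ (x', (P n₀).2 + 1)) n).1
        ((Function.update P n₀ (x', (P n₀).2 + 1)) n).2) := by
  contrapose! h
  have H : ∀ i : ℕ, NSep (fun n =>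
      f n '' cylinder ((Function.update P n₀ (Function.update (P n₀).1 (P n₀).2 i,
        (P n₀).2 + 1)) n).1 ((Function.update P n₀ (Function.update (P n₀).1 (P n₀).2 i,
        (P n₀).2 + 1)) n).2) :=
    fun i => h _ (update_mem_cylinder _ _ _)
  choose B hB1 hB2 hB3 using H
  refine ⟨fun n => if n = n₀ then ⋃ i, B i n₀ else ⋂ i, B i n, fun n => ?_, fun n => ?_, ?_⟩
  · by_cases hn : n = n₀
    · subst hn
      simp only [eq_self_iff_true, if_true]
      rw [← iUnion_cylinder_update (P n).1 (P n).2, image_iUnion]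
      refine iUnion_subset fun i => ?_
      refine subset_iUnion_of_subset i ?_
      have := hB1 i n
      simpa only [Function.update_self] using this
    · simp only [if_neg hn]
      refine subset_iInter fun i => ?_
      have := hB1 i n
      simp only [Function.update_of_ne hn] at this
      exact this
  · by_cases hn : n = n₀
    · simp only [if_pos hn]; exact .iUnion fun i => hB2 i n₀
    · simp only [if_neg hn]; exact .iInter fun i => hB2 i n
  · ext y
    simp only [mem_iInter, mem_empty_iff_false, iff_false, not_forall]
    by_contra hy
    push_neg at hy
    have hy0 := hy n₀
    rw [if_pos rfl] at hy0
    obtain ⟨i, hi⟩ := mem_iUnion.1 hy0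
    have : y ∈ ⋂ n, B i n := by
      refine mem_iInter.2 fun n => ?_
      by_cases hn : n = n₀
      · subst hn; exact hi
      · have := hy n
        rw [if_neg hn] at this
        exact mem_iInter.1 this i
    rw [hB3 i] at this
    exact this

/-- **Novikov's countable separation theorem**, for ranges of continuous functions
from the Baire space. -/
theorem nsep_ranges {α : Type*} [TopologicalSpace α] [T2Space α] [MeasurableSpace α]
    [OpensMeasurableSpace α] (f : ℕ → (ℕ → ℕ) → α) (hf : ∀ n, Continuous (f n))
    (h : (⋂ n, range (f n)) = ∅) : NSep (fun n => range (f n)) := by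
  by_contra hsep
  -- the type of "states": families of cylinders whose images are not countably separated
  let St := {P : ℕ → (ℕ → ℕ) × ℕ //
    ¬ NSep (fun n => f n '' cylinder (P n).1 (P n).2)}
  have init : St := ⟨fun _ => (fun _ => 0, 0), by
    convert hsep using 2 with n
    simp [cylinder_zero, image_univ]⟩
  -- one step of the construction: extend the cylinder of index `(Nat.unpair k).1`
  have step : ∀ (p : St) (k : ℕ), ∃ q : St,
      (∀ n ≠ (Nat.unpair k).1, q.1 n = p.1 n) ∧
      (q.1 (Nat.unpair k).1).2 = (p.1 (Nat.unpair k).1).2 + 1 ∧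
      (q.1 (Nat.unpair k).1).1 ∈ cylinder (p.1 (Nat.unpair k).1).1 (p.1 (Nat.unpair k).1).2 := by
    intro p k
    obtain ⟨x', hx', hns⟩ := nsep_split f p.1 (Nat.unpair k).1 p.2
    refine ⟨⟨Function.update p.1 (Nat.unpair k).1 (x', (p.1 (Nat.unpair k).1).2 + 1), hns⟩,
      fun n hn => Function.update_of_ne hn _ _, ?_, ?_⟩
    · simp [Function.update_self]
    · simpa [Function.update_self] using hx'
  choose F hF1 hF2 hF3 using step
  -- the sequence of states
  let seq : ℕ → St := fun k => Nat.rec init (fun k ih => F ih k) k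
  have seq_succ : ∀ k, seq (k + 1) = F (seq k) k := fun k => rfl
  set L : ℕ → ℕ → ℕ := fun k n => ((seq k).1 n).2 with hL
  set b : ℕ → ℕ → (ℕ → ℕ) := fun k n => ((seq k).1 n).1 with hb
  -- length evolution
  have L_succ_eq : ∀ k, L (k+1) (Nat.unpair k).1 = L k (Nat.unpair k).1 + 1 := by
    intro k; exact hF2 (seq k) k
  have L_succ_ne : ∀ k n, n ≠ (Nat.unpair k).1 → L (k+1) n = L k n := by
    intro k n hn
    simp only [hL, seq_succ]
    rw [hF1 (seq k) k n hn]
  have L_mono_succ : ∀ k n, L k n ≤ L (k+1) n := by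
    intro k n
    rcases eq_or_ne n (Nat.unpair k).1 with h | h
    · subst h; rw [L_succ_eq]; omega
    · rw [L_succ_ne k n h]
  have L_mono : ∀ n, Monotone (fun k => L k n) := by
    intro n
    apply monotone_nat_of_le_succ
    intro k; exact L_mono_succ k n
  -- base point evolution
  have b_succ : ∀ k n, b (k+1) n ∈ cylinder (b k n) (L k n) := by
    intro k n
    rcases eq_or_ne n (Nat.unpair k).1 with h | h
    · subst h; exact hF3 (seq k) k
    · have : b (k+1) n = b k n := by
        simp only [hb, seq_succ]; rw [hF1 (seq k) k n h]
      rw [this]; exact self_mem_cylinder _ _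
  -- coordinate stabilization
  have b_stable : ∀ n j k k', k ≤ k' → j < L k n → b k' n j = b k n j := by
    intro n j k k'
    induction k' with
    | zero =>
        intro hkk' _
        have : k = 0 := Nat.le_zero.1 hkk'
        subst this; rfl
    | succ k' ih =>
        intro hkk' hj
        by_cases h : k ≤ k'
        · have e1 : b (k'+1) n j = b k' n j := by
            have hmem := b_succ k' n
            rw [mem_cylinder_iff] at hmem
            exact hmem j (lt_of_lt_of_le hj (L_mono n h))
          rw [e1, ih h hj]
        · have : k = k' + 1 := by omega
          subst this; rfl
  -- lengths tend to infinity
  have L_unbounded : ∀ n N, ∃ k, N ≤ L k n := by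
    intro n N
    induction N with
    | zero => exact ⟨0, Nat.zero_le _⟩
    | succ N ih =>
        obtain ⟨k, hk⟩ := ih
        have h1 : k ≤ Nat.pair n k := le_trans (Nat.le_add_left k n) (Nat.add_le_pair n k)
        have h3 : L k n ≤ L (Nat.pair n k) n := L_mono n h1
        have h4 : L (Nat.pair n k + 1) (Nat.unpair (Nat.pair n k)).1
            = L (Nat.pair n k) (Nat.unpair (Nat.pair n k)).1 + 1 := L_succ_eq (Nat.pair n k)
        simp only [Nat.unpair_pair] at h4
        exact ⟨Nat.pair n k + 1, by omega⟩
  -- the limit points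
  have exk : ∀ n j, ∃ k, j < L k n := fun n j => (L_unbounded n (j+1))
  let xs : ℕ → (ℕ → ℕ) := fun n j => b (exk n j).choose n j
  have xs_eq : ∀ n j k, j < L k n → xs n j = b k n j := by
    intro n j k hj
    have h1 := (exk n j).choose_spec
    rcases le_total (exk n j).choose k with h | h
    · exact (b_stable n j _ k h h1).symm
    · exact (b_stable n j k _ h hj)
  have xs_mem : ∀ n k, xs n ∈ cylinder (b k n) (L k n) := by
    intro n k
    rw [mem_cylinder_iff]
    intro i hi
    exact xs_eq n i k hi
  have M : ∀ k, ¬ NSep (fun n => f n '' cylinder (xs n) (L k n)) := by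
    intro k
    have h2 : (fun n => f n '' cylinder (xs n) (L k n))
        = (fun n => f n '' cylinder (b k n) (L k n)) := by
      funext n
      rw [mem_cylinder_iff_eq.1 (xs_mem n k)]
    rw [h2]
    exact (seq k).2
  -- all limit values agree
  have zeq : ∀ n m, f n (xs n) = f m (xs m) := by
    intro n m
    rcases eq_or_ne n m with rfl | hnm
    · rfl
    by_contra hne
    obtain ⟨u, v, u_open, v_open, xu, yv, huv⟩ := t2_separation hne
    letI : MetricSpace (ℕ → ℕ) := metricSpaceNatNat
    obtain ⟨εx, εxpos, hεx⟩ : ∃ εx : ℝ, εx > 0 ∧ Metric.ball (xs n) εx ⊆ f n ⁻¹' u :=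
      Metric.mem_nhds_iff.1 ((hf n).continuousAt.preimage_mem_nhds (u_open.mem_nhds xu))
    obtain ⟨εy, εypos, hεy⟩ : ∃ εy : ℝ, εy > 0 ∧ Metric.ball (xs m) εy ⊆ f m ⁻¹' v :=
      Metric.mem_nhds_iff.1 ((hf m).continuousAt.preimage_mem_nhds (v_open.mem_nhds yv))
    obtain ⟨N, hN⟩ : ∃ N : ℕ, (1 / 2 : ℝ) ^ N < min εx εy :=
      exists_pow_lt_of_lt_one (lt_min εxpos εypos) (by norm_num)
    obtain ⟨k1, hk1⟩ := L_unbounded n N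
    obtain ⟨k2, hk2⟩ := L_unbounded m N
    set k := max k1 k2
    have hkn : N ≤ L k n := le_trans hk1 (L_mono n (le_max_left _ _))
    have hkm : N ≤ L k m := le_trans hk2 (L_mono m (le_max_right _ _))
    apply M k
    refine ⟨fun i => if i = n then u else if i = m then v else univ, fun i => ?_, fun i => ?_, ?_⟩
    · rcases eq_or_ne i n with rfl | hin
      · simp only [if_pos rfl]
        refine subset_trans (image_mono (cylinder_anti _ hkn)) ?_
        rw [image_subset_iff]
        refine subset_trans ?_ hεx
        intro z hz
        rw [mem_cylinder_iff_dist_le] at hz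
        exact lt_of_le_of_lt (hz.trans (le_of_eq rfl)) (lt_of_lt_of_le hN (min_le_left _ _))
      rcases eq_or_ne i m with rfl | him
      · simp only [if_neg hin, if_pos rfl]
        refine subset_trans (image_mono (cylinder_anti _ hkm)) ?_
        rw [image_subset_iff]
        refine subset_trans ?_ hεy
        intro z hz
        rw [mem_cylinder_iff_dist_le] at hz
        exact lt_of_le_of_lt (hz.trans (le_of_eq rfl)) (lt_of_lt_of_le hN (min_le_right _ _))
      · simp only [if_neg hin, if_neg him]; exact subset_univ _
    · rcases eq_or_ne i n with rfl | hin
      · simpa only [if_pos rfl, if_true] using u_open.measurableSet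
      rcases eq_or_ne i m with rfl | him
      · simp only [if_neg hin, if_pos rfl]; exact v_open.measurableSet
      · simp only [if_neg hin, if_neg him]; exact MeasurableSet.univ
    · apply eq_empty_of_subset_empty
      intro z hz
      have hzn := mem_iInter.1 hz n
      have hzm := mem_iInter.1 hz m
      rw [if_pos rfl] at hzn
      rw [if_neg hnm.symm, if_pos rfl] at hzm
      exact (disjoint_left.1 huv hzn) hzm
  have : f 0 (xs 0) ∈ ⋂ n, range (f n) := by
    refine mem_iInter.2 fun n => ?_
    rw [zeq 0 n]
    exact mem_range_self _
  rw [h] at this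
  exact this

theorem nsep_analytic {α : Type*} [TopologicalSpace α] [T2Space α] [MeasurableSpace α]
    [OpensMeasurableSpace α] (s : ℕ → Set α) (hs : ∀ n, AnalyticSet (s n))
    (h : (⋂ n, s n) = ∅) : NSep s := by
  by_cases he : ∃ n₀, s n₀ = ∅
  · obtain ⟨n₀, hn₀⟩ := he
    refine ⟨fun n => if n = n₀ then ∅ else univ, fun n => ?_, fun n => ?_, ?_⟩
    · rcases eq_or_ne n n₀ with rfl | hn
      · simp [hn₀]
      · simp [if_neg hn]
    · rcases eq_or_ne n n₀ with rfl | hn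
      · simp
      · simp [if_neg hn]
    · apply eq_empty_of_subset_empty
      intro z hz
      have := mem_iInter.1 hz n₀
      simpa using this
  · push_neg at he
    have hex : ∀ n, ∃ f : (ℕ → ℕ) → α, Continuous f ∧ range f = s n := by
      intro n
      have h' := hs n
      rw [AnalyticSet] at h'
      rcases h' with h0 | hf
      · exact absurd h0 (he n).ne_empty
      · exact hf
    choose f hf hrange using hex
    have hiempty : (⋂ n, range (f n)) = ∅ := by
      rw [show (fun n => range (f n)) = s from funext hrange]
      exact h
    have := nsep_ranges f hf hiempty
    obtain ⟨B, h1, h2, h3⟩ := this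
    exact ⟨B, fun n => (hrange n) ▸ h1 n, h2, h3⟩

/-- Projection theorem: the projection of a Borel subset of `T × H` with closed sections,
where `H` is compact Polish, is Borel. -/
theorem measurableSet_fst_image_of_isClosed_sections
    {T H : Type*} [MeasurableSpace T] [StandardBorelSpace T]
    [TopologicalSpace H] [PolishSpace H] [CompactSpace H]
    [MeasurableSpace H] [BorelSpace H]
    (B : Set (T × H)) (hB : MeasurableSet B)
    (hsec : ∀ t, IsClosed {h : H | (t, h) ∈ B}) :
    MeasurableSet (Prod.fst '' B) := by
  classical
  letI := upgradeStandardBorel T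
  -- a countable family of basic open sets
  obtain ⟨bas, bas_count, _, bas_basis⟩ := TopologicalSpace.exists_countable_basis H
  obtain ⟨V, hV⟩ : ∃ V : ℕ → Set H, insert ∅ bas = range V :=
    Set.Countable.exists_eq_range (bas_count.insert ∅) (insert_nonempty _ _)
  have V_open : ∀ k, IsOpen (V k) := by
    intro k
    have : V k ∈ insert ∅ bas := hV ▸ mem_range_self k
    rcases this with h | h
    · rw [h]; exact isOpen_empty
    · exact bas_basis.isOpen h
  -- regularity: basic neighborhoods with closure inside a given open set
  have reg : ∀ (a : H) (W : Set H), IsOpen W → a ∈ W →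
      ∃ k, a ∈ V k ∧ closure (V k) ⊆ W := by
    intro a W hW ha
    rcases (closed_nhds_basis a).mem_iff.1 (hW.mem_nhds ha) with ⟨C, ⟨hC_nhds, hC_closed⟩, hCW⟩
    have hintC : a ∈ interior C := mem_interior_iff_mem_nhds.2 hC_nhds
    obtain ⟨Vb, hVb_mem, haVb, hVbsub⟩ :=
      bas_basis.exists_subset_of_mem_open hintC isOpen_interior
    obtain ⟨k, hk⟩ : ∃ k, V k = Vb := by
      have hmem : Vb ∈ insert ∅ bas := mem_insert_of_mem _ hVb_mem
      rw [hV] at hmem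
      exact hmem
    refine ⟨k, hk ▸ haVb, ?_⟩
    rw [hk]
    calc closure Vb ⊆ closure (interior C) := closure_mono hVbsub
      _ ⊆ C := hC_closed.closure_interior_subset
      _ ⊆ W := hCW
  -- the analytic sets
  set A : ℕ → Set T := fun k => Prod.fst '' (B ∩ univ ×ˢ closure (V k)) with hA_def
  have hA_an : ∀ k, AnalyticSet (A k) := by
    intro k
    exact (hB.inter (MeasurableSet.univ.prod isClosed_closure.measurableSet)).analyticSet_image
      measurable_fst
  have prodAnalytic : ∀ (s : Set T) (C : Set H), AnalyticSet s → IsClosed C →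
      AnalyticSet (s ×ˢ C) := by
    intro s C hs hC
    rcases eq_empty_or_nonempty s with rfl | hsne
    · simp only [empty_prod]; exact analyticSet_empty
    rcases analyticSet_iff_exists_polishSpace_range.1 hs with ⟨β, hβt, hβp, g, hg, hgr⟩
    rcases analyticSet_iff_exists_polishSpace_range.1 hC.analyticSet with ⟨γ, hγt, hγp, g2, hg2, hgr2⟩
    rw [analyticSet_iff_exists_polishSpace_range]
    letI := hβt; letI := hβp; letI := hγt; letI := hγp
    refine ⟨β × γ, inferInstance, inferInstance, Prod.map g g2, hg.prodMap hg2, ?_⟩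
    rw [range_prodMap, hgr, hgr2]
  set Hk : ℕ → Set (T × H) := fun k => (A k ×ˢ closure (V k)) ∪ univ ×ˢ (V k)ᶜ with hHk_def
  have analyticSet_union : ∀ (u v : Set (T × H)), AnalyticSet u → AnalyticSet v →
      AnalyticSet (u ∪ v) := by
    intro u v hu hv
    have : u ∪ v = ⋃ b : Bool, (if b then u else v) := by
      ext z
      simp only [mem_iUnion, Bool.exists_bool, if_true, if_false, mem_union]
      tauto
    rw [this]
    exact AnalyticSet.iUnion (fun b => by cases b <;> simpa)
  have hHk_an : ∀ k, AnalyticSet (Hk k) := by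
    intro k
    apply analyticSet_union
    · exact prodAnalytic _ _ (hA_an k) isClosed_closure
    · exact ((MeasurableSet.univ.prod (V_open k).isClosed_compl.measurableSet)).analyticSet
  -- the family to separate
  set S : ℕ → Set (T × H) := fun n => Nat.rec Bᶜ (fun k _ => Hk k) n with hS_def
  have hS0 : S 0 = Bᶜ := rfl
  have hSsucc : ∀ k, S (k + 1) = Hk k := fun k => rfl
  have hS_an : ∀ n, AnalyticSet (S n) := by
    intro n
    cases n with
    | zero => exact hB.compl.analyticSet
    | succ k => exact hHk_an k
  have hS_empty : (⋂ n, S n) = ∅ := by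
    apply eq_empty_of_subset_empty
    rintro ⟨t, a⟩ hz
    have hU : (t, a) ∈ Bᶜ := mem_iInter.1 hz 0
    have hopen : IsOpen {h : H | (t, h) ∈ B}ᶜ := (hsec t).isOpen_compl
    obtain ⟨k, hak, hclk⟩ := reg a _ hopen hU
    have hk := mem_iInter.1 hz (k + 1)
    rw [hSsucc] at hk
    rcases hk with hk | hk
    · obtain ⟨⟨t', a'⟩, ⟨ha'B, -, ha'cl⟩, ht'⟩ := hk.1
      have ht'' : t' = t := ht'
      subst ht''
      exact hclk ha'cl ha'B
    · exact hk.2 hak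
  obtain ⟨Bh, hBh_sub, hBh_meas, hBh_empty⟩ := nsep_analytic S hS_an hS_empty
  -- Lusin separation of A k from the co-analytic sets M k
  have hMc_an : ∀ k, AnalyticSet ((Bh (k + 1))ᶜ ∩ univ ×ˢ closure (V k) |>.image Prod.fst) :=
    fun k => ((hBh_meas (k + 1)).compl.inter
      (MeasurableSet.univ.prod isClosed_closure.measurableSet)).analyticSet_image measurable_fst
  have hdisj : ∀ k, Disjoint (A k) (Prod.fst '' ((Bh (k + 1))ᶜ ∩ univ ×ˢ closure (V k))) := by
    intro k
    rw [disjoint_left]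
    rintro t htA ⟨⟨t', a'⟩, ⟨ha'c, -, ha'cl⟩, rfl⟩
    apply ha'c
    apply hBh_sub (k + 1)
    rw [hSsucc]
    left
    exact ⟨htA, ha'cl⟩
  have hsep : ∀ k, ∃ Ah : Set T, A k ⊆ Ah ∧
      Disjoint (Prod.fst '' ((Bh (k + 1))ᶜ ∩ univ ×ˢ closure (V k))) Ah ∧ MeasurableSet Ah := by
    intro k
    exact (hA_an k).measurablySeparable (hMc_an k) (hdisj k)
  choose Ah hAh_sub hAh_disj hAh_meas using hsep
  -- the final identity
  have final : (Prod.fst '' B)ᶜ =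
      ⋃ (F : Finset ℕ) (_ : (⋃ k ∈ F, V k) = univ), ⋂ k ∈ F, (Ah k)ᶜ := by
    ext t
    simp only [mem_compl_iff, mem_iUnion, mem_iInter]
    constructor
    · intro ht
      -- B_t = ∅, cover H by the V k with t ∉ Ah k
      have hcov : ∀ a : H, ∃ k, a ∈ V k ∧ t ∉ Ah k := by
        intro a
        have haU : (t, a) ∈ Bᶜ := fun hmem => ht ⟨(t, a), hmem, rfl⟩
        have : (t, a) ∉ ⋂ n, Bh n := by rw [hBh_empty]; exact notMem_empty _
        have hexn : ∃ n, (t, a) ∉ Bh n := by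
          by_contra hc
          push_neg at hc
          exact this (mem_iInter.2 hc)
        obtain ⟨n, hn⟩ := hexn
        cases n with
        | zero => exact absurd (hBh_sub 0 haU) hn
        | succ k =>
            have hnotHk : (t, a) ∉ Hk k := fun hmem => hn (hBh_sub (k+1) (by rwa [hSsucc]))
            have haVk : a ∈ V k := by
              by_contra hav
              exact hnotHk (Or.inr ⟨trivial, hav⟩)
            refine ⟨k, haVk, fun htAh => ?_⟩
            -- t ∈ Ah k: disjointness with M k forces (t,a) ∈ Bh (k+1)
            have htM : t ∉ Prod.fst '' ((Bh (k + 1))ᶜ ∩ univ ×ˢ closure (V k)) :=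
              fun hmem => (disjoint_left.1 (hAh_disj k)) hmem htAh
            apply htM
            refine ⟨(t, a), ⟨?_, trivial, subset_closure haVk⟩, rfl⟩
            intro hmem
            exact hn hmem
      choose kf hkf1 hkf2 using hcov
      obtain ⟨Fa, hFa⟩ := isCompact_univ.elim_finite_subcover (fun a : H => V (kf a))
        (fun a => V_open _) (fun a _ => mem_iUnion.2 ⟨a, hkf1 a⟩)
      refine ⟨Fa.image kf, ?_, ?_⟩
      · apply subset_antisymm (subset_univ _)
        intro a _
        obtain ⟨a', ha'F, haV⟩ := mem_iUnion₂.1 (hFa (mem_univ a))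
        exact mem_iUnion₂.2 ⟨kf a', Finset.mem_image_of_mem kf ha'F, haV⟩
      · intro k hk
        obtain ⟨a', _, rfl⟩ := Finset.mem_image.1 hk
        exact hkf2 a'
    · rintro ⟨F, hFcov, hFnot⟩ ⟨⟨t', a⟩, haB, rfl⟩
      have : a ∈ ⋃ k ∈ F, V k := hFcov ▸ mem_univ a
      obtain ⟨k, hkF, hak⟩ := mem_iUnion₂.1 this
      apply hFnot k hkF
      apply hAh_sub k
      exact ⟨(t', a), ⟨haB, trivial, subset_closure hak⟩, rfl⟩
  have : MeasurableSet ((Prod.fst '' B)ᶜ) := by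
    rw [final]
    refine MeasurableSet.iUnion fun F => ?_
    refine MeasurableSet.iUnion fun _ => ?_
    exact MeasurableSet.biInter F.countable_toSet fun k _ => (hAh_meas k).compl
  simpa using this.compl

section Separability

variable {A : Type*} [MetricSpace A] [MeasurableSpace A] [BorelSpace A] [StandardBorelSpace A]

lemma isClosed_of_separated' {ε : ℝ} (hε : 0 < ε) {S T : Set A} (hTS : T ⊆ S)
    (hS : ∀ x ∈ S, ∀ y ∈ S, x ≠ y → ε ≤ dist x y) : IsClosed T := by
  apply isClosed_of_closure_subset
  intro a ha
  rcases Metric.mem_closure_iff.1 ha (ε/2) (half_pos hε) with ⟨t1, ht1T, hd1⟩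
  by_cases h0 : a = t1
  · rwa [h0]
  · have hd : 0 < dist a t1 := dist_pos.2 h0
    rcases Metric.mem_closure_iff.1 ha (min (ε/2) (dist a t1))
      (lt_min (half_pos hε) hd) with ⟨t2, ht2T, hd2⟩
    have ht2ne : t1 ≠ t2 := by
      intro h
      rw [← h] at hd2
      exact absurd hd2 (not_lt.2 (min_le_right _ _))
    have h1 : ε ≤ dist t1 t2 := hS _ (hTS ht1T) _ (hTS ht2T) ht2ne
    have h2 : dist t1 t2 ≤ dist t1 a + dist a t2 := dist_triangle _ _ _
    have h3 : dist t1 a = dist a t1 := dist_comm _ _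
    have h4 : dist a t2 < ε/2 := lt_of_lt_of_le hd2 (min_le_left _ _)
    linarith

lemma countable_of_separated {ε : ℝ} (hε : 0 < ε) {S : Set A}
    (hS : ∀ x ∈ S, ∀ y ∈ S, x ≠ y → ε ≤ dist x y) : S.Countable := by
  by_contra hc
  have hSclosed : IsClosed S := isClosed_of_separated' hε subset_rfl hS
  have hSm : MeasurableSet S := hSclosed.measurableSet
  haveI : StandardBorelSpace ↥S := hSm.standardBorel
  have hSc : ¬ Countable ↥S := by rwa [Set.countable_coe_iff]
  have hRc : ¬ Countable ℝ := fun h => Cardinal.not_countable_real Set.countable_univ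
  let e := PolishSpace.measurableEquivOfNotCountable hSc hRc
  have hall : ∀ T : Set ↥S, MeasurableSet T := by
    intro T
    have h1 : IsClosed (Subtype.val '' T : Set A) :=
      isClosed_of_separated' hε (by rintro x ⟨y, -, rfl⟩; exact y.2) hS
    have h2 : MeasurableSet (Subtype.val '' T : Set A) := h1.measurableSet
    have h3 : T = Subtype.val ⁻¹' (Subtype.val '' T : Set A) :=
      (preimage_image_eq T Subtype.val_injective).symm
    rw [h3]
    exact measurable_subtype_coe h2
  have hmeas : ∀ T : Set ↥S, MeasurableSet (⇑e.symm ⁻¹' T) := fun T => e.symm.measurable (hall T)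
  have hinj : Function.Injective (fun T : Set ↥S =>
      (⟨⇑e.symm ⁻¹' T, hmeas T⟩ : {t : Set ℝ | MeasurableSet t})) := by
    intro T1 T2 h12
    have h12' : ⇑e.symm ⁻¹' T1 = ⇑e.symm ⁻¹' T2 := congrArg Subtype.val h12
    exact (Set.preimage_injective.2 e.symm.surjective) h12'
  have h1 : Cardinal.lift.{0} (Cardinal.mk (Set ↥S)) ≤
      Cardinal.lift (Cardinal.mk {t : Set ℝ | MeasurableSet t}) :=
    Cardinal.lift_mk_le'.2 ⟨⟨_, hinj⟩⟩
  have h2 : Cardinal.mk {t : Set ℝ | MeasurableSet t} ≤ Cardinal.continuum := by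
    obtain ⟨b, hbc, hb⟩ := MeasurableSpace.CountablyGenerated.isCountablyGenerated (α := ℝ)
    rw [hb]
    exact MeasurableSpace.cardinal_measurableSet_le_continuum
      (hbc.le_aleph0.trans Cardinal.aleph0_le_continuum)
  have h4 : Cardinal.lift.{0} (Cardinal.mk ↥S) = Cardinal.lift (Cardinal.mk ℝ) :=
    Cardinal.lift_mk_eq'.2 ⟨e.toEquiv⟩
  have hle : Cardinal.lift.{0} (Cardinal.mk (Set ↥S)) ≤ Cardinal.lift.{0} (Cardinal.mk ↥S) := by
    calc Cardinal.lift.{0} (Cardinal.mk (Set ↥S))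
        ≤ Cardinal.lift (Cardinal.mk {t : Set ℝ | MeasurableSet t}) := h1
      _ ≤ Cardinal.lift (Cardinal.mk ℝ) := by
          rw [Cardinal.mk_real]
          exact Cardinal.lift_le.2 (h2.trans_eq rfl)
      _ = Cardinal.lift.{0} (Cardinal.mk ↥S) := h4.symm
  have hfin : Cardinal.mk (Set ↥S) ≤ Cardinal.mk ↥S := Cardinal.lift_le.1 hle
  rw [Cardinal.mk_set] at hfin
  exact absurd hfin (not_le.2 (Cardinal.cantor _))

/-- A metric space which is a standard Borel space is second countable. -/
lemma secondCountable_of_metric_standardBorel : SecondCountableTopology A := by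
  apply Metric.secondCountable_of_almost_dense_set
  intro ε hε
  have hchain : ∀ c ⊆ {s : Set A | ∀ x ∈ s, ∀ y ∈ s, x ≠ y → ε ≤ dist x y},
      IsChain (fun x1 x2 => x1 ⊆ x2) c →
      ∃ ub ∈ {s : Set A | ∀ x ∈ s, ∀ y ∈ s, x ≠ y → ε ≤ dist x y}, ∀ s ∈ c, s ⊆ ub := by
    intro c hcS hchain
    refine ⟨⋃₀ c, ?_, fun s hs => subset_sUnion_of_mem hs⟩
    rintro x ⟨s, hsc, hxs⟩ y ⟨s', hs'c, hys'⟩ hxy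
    rcases hchain.total hsc hs'c with h | h
    · exact hcS hs'c x (h hxs) y hys' hxy
    · exact hcS hsc x hxs y (h hys') hxy
  obtain ⟨M, hM⟩ := zorn_subset {s : Set A | ∀ x ∈ s, ∀ y ∈ s, x ≠ y → ε ≤ dist x y} hchain
  refine ⟨M, countable_of_separated hε hM.prop, fun x => ?_⟩
  by_contra hx
  push_neg at hx
  have hxM : x ∉ M := fun h => by
    have h1 := hx x h
    rw [dist_self] at h1
    linarith
  have hins : insert x M ∈ {s : Set A | ∀ x ∈ s, ∀ y ∈ s, x ≠ y → ε ≤ dist x y} := by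
    rintro u (rfl | huM) v (rfl | hvM) huv
    · exact absurd rfl huv
    · exact le_of_lt (hx v hvM)
    · rw [dist_comm]; exact le_of_lt (hx u huM)
    · exact hM.prop u huM v hvM huv
  have := hM.2 hins (subset_insert x M)
  exact hxM (this (mem_insert x M))

end Separability

/-- Projection theorem: the projection of a Borel subset of `T × A` with compact sections,
`T` standard Borel, `A` metric standard Borel, is Borel. -/
theorem measurableSet_fst_image_of_isCompact_sections
    {T A : Type*} [MeasurableSpace T] [StandardBorelSpace T]
    [MetricSpace A] [MeasurableSpace A] [BorelSpace A] [StandardBorelSpace A]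
    (B : Set (T × A)) (hB : MeasurableSet B)
    (hsec : ∀ t, IsCompact {a : A | (t, a) ∈ B}) :
    MeasurableSet (Prod.fst '' B) := by
  haveI := secondCountable_of_metric_standardBorel (A := A)
  rcases isEmpty_or_nonempty A with hA | hA
  · have : Prod.fst '' B = ∅ := by
      apply eq_empty_of_forall_notMem
      rintro t ⟨⟨t', a⟩, -, -⟩
      exact (IsEmpty.false a).elim
    rw [this]
    exact MeasurableSet.empty
  · set z : ℕ → A := TopologicalSpace.denseSeq A with hz
    have hzd : DenseRange z := TopologicalSpace.denseRange_denseSeq A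
    set H := ℕ → (Icc (0:ℝ) 1) with hH
    letI : MeasurableSpace H := borel H
    haveI : BorelSpace H := ⟨rfl⟩
    set e : A → H := fun a k => ⟨min 1 (dist a (z k)),
      ⟨le_min zero_le_one dist_nonneg, min_le_left _ _⟩⟩ with he
    have he_cont : Continuous e := by
      apply continuous_pi
      intro k
      apply Continuous.subtype_mk
      exact continuous_const.min ((continuous_id.dist continuous_const))
    have he_inj : Function.Injective e := by
      intro a b hab
      by_contra hne
      have hd : 0 < dist a b := dist_pos.2 hne
      have hδpos : 0 < min 1 (dist a b / 2) := lt_min one_pos (by linarith)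
      obtain ⟨k, hk⟩ := (Metric.denseRange_iff.1 hzd) a (min 1 (dist a b / 2)) hδpos
      have hcomp : min 1 (dist a (z k)) = min 1 (dist b (z k)) :=
        congrArg Subtype.val (congrFun hab k)
      have ha1 : dist a (z k) < 1 := lt_of_lt_of_le hk (min_le_left _ _)
      have ha2 : dist a (z k) < dist a b / 2 := lt_of_lt_of_le hk (min_le_right _ _)
      rw [min_eq_right ha1.le] at hcomp
      have hb' : dist b (z k) = dist a (z k) := by
        rcases le_total (dist b (z k)) 1 with h | h
        · rw [min_eq_right h] at hcomp; exact hcomp.symm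
        · rw [min_eq_left h] at hcomp
          exact absurd hcomp (ne_of_lt ha1)
      have htri : dist a b ≤ dist a (z k) + dist (z k) b := dist_triangle _ _ _
      rw [dist_comm (z k) b, hb'] at htri
      linarith
    set Φ : T × A → T × H := fun p => (p.1, e p.2) with hΦ
    have hmap_meas : Measurable Φ :=
      measurable_fst.prodMk ((he_cont.measurable).comp measurable_snd)
    have hinj' : Function.Injective Φ := by
      rintro ⟨t1, a1⟩ ⟨t2, a2⟩ h
      have h1 : t1 = t2 := congrArg Prod.fst h
      have h2 : e a1 = e a2 := congrArg Prod.snd h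
      exact Prod.ext h1 (he_inj h2)
    have hB' : MeasurableSet (Φ '' B) := hB.image_of_measurable_injOn hmap_meas hinj'.injOn
    have hsec' : ∀ t, IsClosed {h : H | (t, h) ∈ Φ '' B} := by
      intro t
      have himg : {h : H | (t, h) ∈ Φ '' B} = e '' {a : A | (t, a) ∈ B} := by
        ext h
        constructor
        · rintro ⟨⟨t', a⟩, hmem, heq⟩
          have h1 : t' = t := congrArg Prod.fst heq
          have h2 : e a = h := congrArg Prod.snd heq
          exact ⟨a, by rwa [h1] at hmem, h2⟩
        · rintro ⟨a, haB, rfl⟩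
          exact ⟨(t, a), haB, rfl⟩
      rw [himg]
      exact ((hsec t).image he_cont).isClosed
    have hproj : Prod.fst '' (Φ '' B) = Prod.fst '' B := by
      rw [← image_comp]
      rfl
    rw [← hproj]
    exact measurableSet_fst_image_of_isClosed_sections (Φ '' B) hB' hsec'

lemma iSup_min_natCast (y : ℝ≥0∞) : (⨆ n : ℕ, min y (n : ℝ≥0∞)) = y := by
  apply le_antisymm (iSup_le fun n => min_le_left _ _)
  rcases eq_or_ne y ⊤ with rfl | hy
  · have h1 : (⨆ n : ℕ, (n : ℝ≥0∞)) ≤ ⨆ n : ℕ, min (⊤ : ℝ≥0∞) (n : ℝ≥0∞) :=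
      iSup_mono fun n => by simp
    rw [ENNReal.iSup_natCast] at h1
    exact h1
  · obtain ⟨n, hn⟩ := ENNReal.exists_nat_gt hy
    exact le_iSup_of_le n (le_of_eq (min_eq_left hn.le).symm)

section SubLevel

variable {A : Type*} [MetricSpace A] {ActX : Set A} {cx : A → ℝ≥0∞}

/-- Sub-level sets of `cx + g` on `ActX` are closed, when `cx` has compact sub-level
sets on `ActX` and `g` is continuous on `ActX`. -/
lemma closed_add_sublevel
    (hcK : ∀ μ : ℝ≥0∞, μ ≠ ⊤ → IsCompact {a | a ∈ ActX ∧ cx a ≤ μ})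
    {g : A → ℝ≥0∞} (hg : ContinuousOn g ActX) {μ : ℝ≥0∞} (hμ : μ ≠ ⊤) :
    IsClosed {a | a ∈ ActX ∧ cx a + g a ≤ μ} := by
  set S := {a | a ∈ ActX ∧ cx a + g a ≤ μ} with hS_def
  apply isClosed_of_closure_subset
  intro a ha
  have hSsub : S ⊆ {a | a ∈ ActX ∧ cx a ≤ μ} :=
    fun a' h => ⟨h.1, le_trans (le_add_right le_rfl) h.2⟩
  have hSA : S ⊆ ActX := fun a' h => h.1
  have haK : a ∈ {a | a ∈ ActX ∧ cx a ≤ μ} :=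
    (hcK μ hμ).isClosed.closure_subset ((closure_mono hSsub) ha)
  have haA : a ∈ ActX := haK.1
  haveI hne : (𝓝[S] a).NeBot := mem_closure_iff_nhdsWithin_neBot.1 ha
  refine ⟨haA, ?_⟩
  have htend : Tendsto g (𝓝[S] a) (𝓝 (g a)) :=
    (hg a haA).mono_left (nhdsWithin_mono a hSA)
  by_cases hGμ : μ < g a
  · exfalso
    have hev : ∀ᶠ a' in 𝓝[S] a, μ < g a' := htend (isOpen_Ioi.mem_nhds hGμ)
    have hev2 : ∀ᶠ a' in 𝓝[S] a, a' ∈ S := eventually_mem_nhdsWithin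
    obtain ⟨a', h1, h2⟩ := (hev.and hev2).exists
    exact absurd (le_trans (le_add_left le_rfl) h2.2) (not_le.2 h1)
  · push_neg at hGμ
    have hGne : g a ≠ ⊤ := fun h => hμ (top_le_iff.1 (h ▸ hGμ))
    have key : ∀ ε : ℝ≥0, 0 < ε → μ < ⊤ → cx a + g a ≤ μ + ε := by
      intro ε hε _
      have hεne : (ε : ℝ≥0∞) ≠ 0 := by exact_mod_cast hε.ne'
      have hcont : Continuous (fun y : ℝ≥0∞ => y + (ε : ℝ≥0∞)) :=
        continuous_id.add continuous_const
      have hopen : IsOpen {y : ℝ≥0∞ | g a < y + ε} := by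
        have : {y : ℝ≥0∞ | g a < y + ε} = (fun y : ℝ≥0∞ => y + (ε:ℝ≥0∞)) ⁻¹' (Ioi (g a)) := rfl
        rw [this]
        exact isOpen_Ioi.preimage hcont
      have hGmem : g a ∈ {y : ℝ≥0∞ | g a < y + ε} := ENNReal.lt_add_right hGne hεne
      have hev : ∀ᶠ a' in 𝓝[S] a, g a < g a' + ε := htend (hopen.mem_nhds hGmem)
      have hμε : (μ + ε) ≠ ⊤ := ENNReal.add_ne_top.2 ⟨hμ, ENNReal.coe_ne_top⟩
      have hsubne : (μ + ε) - g a ≠ ⊤ := fun h => hμε (top_le_iff.1 (h ▸ tsub_le_self))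
      have hev3 : ∀ᶠ a' in 𝓝[S] a, a' ∈ {a' | a' ∈ ActX ∧ cx a' ≤ (μ + ε) - g a} := by
        filter_upwards [hev, eventually_mem_nhdsWithin] with a' h1 h2
        refine ⟨h2.1, ?_⟩
        have hc1 : cx a' + g a ≤ cx a' + (g a' + ε) := add_le_add_right h1.le _
        have hc2 : cx a' + (g a' + ε) = (cx a' + g a') + ε := by ring
        have hc3 : cx a' + g a ≤ μ + ε := by
          rw [hc2] at hc1
          exact hc1.trans (add_le_add_left h2.2 _)
        exact ENNReal.le_sub_of_add_le_right hGne hc3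
      have hfreq : ∃ᶠ a' in 𝓝 a, a' ∈ {a' | a' ∈ ActX ∧ cx a' ≤ (μ + ε) - g a} :=
        (hev3.frequently).filter_mono nhdsWithin_le_nhds
      have hmem : a ∈ {a' | a' ∈ ActX ∧ cx a' ≤ (μ + ε) - g a} :=
        (hcK _ hsubne).isClosed.closure_subset (mem_closure_iff_frequently.2 hfreq)
      calc cx a + g a ≤ ((μ + ε) - g a) + g a := add_le_add_left hmem.2 _
        _ = μ + ε := tsub_add_cancel_of_le (le_trans hGμ (le_add_right le_rfl))
    exact ENNReal.le_of_forall_pos_le_add key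

/-- Sub-level sets of a countable supremum `F = ⨆ n, cx + G n` with `G n` continuous on
`ActX` are compact. -/
lemma compact_sup_sublevel
    (hcK : ∀ μ : ℝ≥0∞, μ ≠ ⊤ → IsCompact {a | a ∈ ActX ∧ cx a ≤ μ})
    {G : ℕ → A → ℝ≥0∞} (hG : ∀ n, ContinuousOn (G n) ActX)
    {F : A → ℝ≥0∞} (hF : ∀ a, a ∈ ActX → F a = ⨆ n, (cx a + G n a))
    {μ : ℝ≥0∞} (hμ : μ ≠ ⊤) :
    IsCompact {a | a ∈ ActX ∧ F a ≤ μ} ∧ IsClosed {a | a ∈ ActX ∧ F a ≤ μ} := by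
  have hset : {a | a ∈ ActX ∧ F a ≤ μ} = ⋂ n, {a | a ∈ ActX ∧ cx a + G n a ≤ μ} := by
    ext a
    simp only [mem_iInter, mem_setOf_eq]
    constructor
    · rintro ⟨h1, h2⟩ n
      refine ⟨h1, ?_⟩
      have := hF a h1
      exact le_trans (le_trans (le_iSup (fun n => cx a + G n a) n) (le_of_eq this.symm)) h2
    · intro h
      have h1 : a ∈ ActX := (h 0).1
      refine ⟨h1, ?_⟩
      rw [hF a h1]
      exact iSup_le fun n => (h n).2
  have hclosed : IsClosed {a | a ∈ ActX ∧ F a ≤ μ} := by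
    rw [hset]
    exact isClosed_iInter fun n => closed_add_sublevel hcK (hG n) hμ
  constructor
  · apply IsCompact.of_isClosed_subset (hcK μ hμ) hclosed
    rintro a ⟨h1, h2⟩
    refine ⟨h1, ?_⟩
    have h3 := hF a h1
    have h4 : cx a + G 0 a ≤ F a := h3 ▸ le_iSup (fun n => cx a + G n a) 0
    exact le_trans (le_trans (le_add_right le_rfl) h4) h2
  · exact hclosed

/-- Attainment of the infimum. -/
lemma exists_min_of_sup
    (hcK : ∀ μ : ℝ≥0∞, μ ≠ ⊤ → IsCompact {a | a ∈ ActX ∧ cx a ≤ μ})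
    {G : ℕ → A → ℝ≥0∞} (hG : ∀ n, ContinuousOn (G n) ActX)
    {F : A → ℝ≥0∞} (hF : ∀ a, a ∈ ActX → F a = ⨆ n, (cx a + G n a))
    (hm : (⨅ a ∈ ActX, F a) ≠ ⊤) :
    ∃ a ∈ ActX, F a = ⨅ a' ∈ ActX, F a' := by
  set m := ⨅ a ∈ ActX, F a with hm_def
  set T : ℕ → Set A := fun k => {a | a ∈ ActX ∧ F a ≤ m + ((k : ℝ≥0∞) + 1)⁻¹} with hT_def
  have hεne : ∀ k : ℕ, ((k : ℝ≥0∞) + 1)⁻¹ ≠ 0 := by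
    intro k
    simp only [ne_eq, ENNReal.inv_eq_zero]
    exact ENNReal.add_ne_top.2 ⟨ENNReal.natCast_ne_top k, ENNReal.one_ne_top⟩
  have hbne : ∀ k : ℕ, m + ((k : ℝ≥0∞) + 1)⁻¹ ≠ ⊤ := by
    intro k
    refine ENNReal.add_ne_top.2 ⟨hm, ?_⟩
    simp only [ne_eq, ENNReal.inv_eq_top]
    exact fun h => by simp at h
  have hTne : ∀ k, (T k).Nonempty := by
    intro k
    have hlt : m < m + ((k : ℝ≥0∞) + 1)⁻¹ := ENNReal.lt_add_right hm (hεne k)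
    by_contra hc
    rw [not_nonempty_iff_eq_empty] at hc
    have hall : ∀ a ∈ ActX, m + ((k : ℝ≥0∞) + 1)⁻¹ ≤ F a := by
      intro a ha
      by_contra hle
      push_neg at hle
      have hmem : a ∈ T k := ⟨ha, hle.le⟩
      rw [hc] at hmem
      exact notMem_empty a hmem
    have hceil : m + ((k : ℝ≥0∞) + 1)⁻¹ ≤ m := le_iInf₂ hall
    exact absurd (lt_of_lt_of_le hlt hceil) (lt_irrefl m)
  have hTanti : ∀ k, T (k + 1) ⊆ T k := by
    intro k a ha
    refine ⟨ha.1, le_trans ha.2 (add_le_add_right ?_ m)⟩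
    apply ENNReal.inv_le_inv.2
    push_cast
    exact add_le_add_left (by exact_mod_cast Nat.le_succ k) 1
  have hTcc := fun k => compact_sup_sublevel hcK hG hF (hbne k)
  have hint : (⋂ k, T k).Nonempty :=
    IsCompact.nonempty_iInter_of_sequence_nonempty_isCompact_isClosed T hTanti hTne
      (hTcc 0).1 (fun k => (hTcc k).2)
  obtain ⟨a, ha⟩ := hint
  have haA : a ∈ ActX := (mem_iInter.1 ha 0).1
  refine ⟨a, haA, le_antisymm ?_ (iInf₂_le a haA)⟩
  apply ENNReal.le_of_forall_pos_le_add
  intro ε hε _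
  obtain ⟨n, hn⟩ := ENNReal.exists_inv_nat_lt (by exact_mod_cast hε.ne' : (ε : ℝ≥0∞) ≠ 0)
  have h1 : F a ≤ m + ((n : ℝ≥0∞) + 1)⁻¹ := (mem_iInter.1 ha n).2
  have h2 : ((n : ℝ≥0∞) + 1)⁻¹ ≤ (n : ℝ≥0∞)⁻¹ := ENNReal.inv_le_inv.2 (le_add_right le_rfl)
  exact le_trans h1 (add_le_add_right (le_trans h2 hn.le) m)

end SubLevel

/-- Lemma 3.2(vi): Under Assumption S*, for a Borel measurable
`(x,α) ↦ w_α(x)` from `𝕏×[0,∞)` to `[0,∞]`, nondecreasing and l.s.c. in `α`, the sets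
`A*_α(x) := {a ∈ Act x : η^α_{w_α}(x,a) = w*_α(x)}` are nonempty; their graph
`{(x,α,a) : a ∈ A*_α(x)}` is Borel in `𝕏×[0,∞)×𝔸`; `A*_α(x) = Act x` if
`w*_α(x) = +∞`; and `A*_α(x)` is compact if `w*_α(x) < +∞`. -/
theorem stmt8 {X A : Type*}
    [MeasurableSpace X] [StandardBorelSpace X]
    [MetricSpace A] [MeasurableSpace A] [BorelSpace A] [StandardBorelSpace A]
    -- the MDP: strict action map with Borel graph admitting a Borel selector,
    -- Borel one-step costs, regular transition probabilities
    (Act : X → Set A) (hstrict : ∀ x, (Act x).Nonempty)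
    (hGr : MeasurableSet {p : X × A | p.2 ∈ Act p.1})
    (hsel : ∃ φ : X → A, Measurable φ ∧ ∀ x, φ x ∈ Act x)
    (c : X → A → ℝ≥0∞)
    (hc : Measurable ({p : X × A | p.2 ∈ Act p.1}.restrict fun p => c p.1 p.2))
    (q : X → A → Measure X)
    (hqp : ∀ x, ∀ a ∈ Act x, IsProbabilityMeasure (q x a))
    (hqm : ∀ B : Set X, MeasurableSet B →
      Measurable ({p : X × A | p.2 ∈ Act p.1}.restrict fun p => q p.1 p.2 B))
    -- Assumption S*(i): inf-compactness of the cost in the action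
    (hS1 : ∀ x, ∀ r : ℝ, IsCompact {a ∈ Act x | c x a ≤ ENNReal.ofReal r})
    -- Assumption S*(ii): setwise continuity of the transition probability in the action
    (hS2 : ∀ x, ∀ f : X → ℝ, Measurable f → (∃ C : ℝ, ∀ z, |f z| ≤ C) →
      ContinuousOn (fun a => ∫ z, f z ∂(q x a)) (Act x))
    (w : ℝ≥0 → X → ℝ≥0∞)
    (hw_meas : Measurable fun p : X × ℝ≥0 => w p.2 p.1)
    (hw_mono : ∀ x, Monotone fun α => w α x)
    (hw_lsc : ∀ x, LowerSemicontinuous fun α => w α x) :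
    (∀ x, ∀ α : ℝ≥0,
      {a ∈ Act x | eta c q (w α) α x a = ⨅ a' ∈ Act x, eta c q (w α) α x a'}.Nonempty) ∧
    MeasurableSet {p : X × ℝ≥0 × A | p.2.2 ∈ Act p.1 ∧
      eta c q (w p.2.1) p.2.1 p.1 p.2.2 = ⨅ a' ∈ Act p.1, eta c q (w p.2.1) p.2.1 p.1 a'} ∧
    (∀ x, ∀ α : ℝ≥0, (⨅ a' ∈ Act x, eta c q (w α) α x a') = ⊤ →
      {a ∈ Act x | eta c q (w α) α x a = ⨅ a' ∈ Act x, eta c q (w α) α x a'} = Act x) ∧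
    (∀ x, ∀ α : ℝ≥0, (⨅ a' ∈ Act x, eta c q (w α) α x a') < ⊤ →
      IsCompact {a ∈ Act x | eta c q (w α) α x a = ⨅ a' ∈ Act x, eta c q (w α) α x a'}) := by
  classical
  -- measurability of the w-slices
  have wmeas : ∀ α : ℝ≥0, Measurable (w α) := fun α =>
    hw_meas.comp (measurable_id.prodMk measurable_const)
  -- compactness of sub-level sets of c
  have hcK : ∀ x : X, ∀ μ : ℝ≥0∞, μ ≠ ⊤ → IsCompact {a | a ∈ Act x ∧ c x a ≤ μ} := by
    intro x μ hμ
    have h := hS1 x μ.toReal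
    rwa [ENNReal.ofReal_toReal hμ] at h
  -- η as a sup of truncations
  have hFeq : ∀ (x : X) (α : ℝ≥0), ∀ a ∈ Act x, eta c q (w α) α x a =
      ⨆ n : ℕ, (c x a + (α : ℝ≥0∞) * ∫⁻ z, min (w α z) n ∂ q x a) := by
    intro x α a _
    have h1 : (∫⁻ z, w α z ∂ q x a) = ⨆ n : ℕ, ∫⁻ z, min (w α z) n ∂ q x a := by
      rw [← lintegral_iSup]
      · congr 1
        funext z
        rw [iSup_min_natCast]
      · exact fun n => (wmeas α).min measurable_const
      · intro n n' hnn' z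
        exact min_le_min le_rfl (by exact_mod_cast hnn')
    show c x a + (α : ℝ≥0∞) * ∫⁻ z, w α z ∂(q x a) = _
    rw [h1, ENNReal.mul_iSup, ENNReal.add_iSup]
  -- continuity of the truncations
  have hGn_cont : ∀ (x : X) (α : ℝ≥0) (n : ℕ),
      ContinuousOn (fun a => (α : ℝ≥0∞) * ∫⁻ z, min (w α z) n ∂ q x a) (Act x) := by
    intro x α n
    have hfm : Measurable (fun z => (min (w α z) (n : ℝ≥0∞)).toReal) :=
      ((wmeas α).min measurable_const).ennreal_toReal
    have hfb : ∃ C : ℝ, ∀ z, |(min (w α z) (n : ℝ≥0∞)).toReal| ≤ C := by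
      refine ⟨n, fun z => ?_⟩
      rw [abs_of_nonneg ENNReal.toReal_nonneg]
      calc (min (w α z) (n:ℝ≥0∞)).toReal ≤ ((n : ℝ≥0∞)).toReal :=
            ENNReal.toReal_mono (ENNReal.natCast_ne_top n) (min_le_right _ _)
        _ = n := by simp
    have hcont := hS2 x _ hfm hfb
    have hbase : ContinuousOn (fun a => ∫⁻ z, min (w α z) n ∂ q x a) (Act x) := by
      have heq : ∀ a ∈ Act x, ∫⁻ z, min (w α z) n ∂ q x a
          = ENNReal.ofReal (∫ z, (min (w α z) (n : ℝ≥0∞)).toReal ∂ q x a) := by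
        intro a ha
        haveI := hqp x a ha
        have hlt : (∫⁻ z, min (w α z) n ∂ q x a) ≠ ⊤ := by
          have hle : (∫⁻ z, min (w α z) n ∂ q x a) ≤ ∫⁻ _, (n : ℝ≥0∞) ∂ q x a :=
            lintegral_mono fun z => min_le_right _ _
          rw [lintegral_const, measure_univ, mul_one] at hle
          exact fun h => (ENNReal.natCast_ne_top n) (top_le_iff.1 (h ▸ hle))
        rw [integral_toReal (((wmeas α).min measurable_const).aemeasurable)
          (ae_of_all _ fun z => lt_of_le_of_lt (min_le_right _ _)
            (lt_top_iff_ne_top.2 (ENNReal.natCast_ne_top n)))]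
        rw [ENNReal.ofReal_toReal hlt]
      exact ContinuousOn.congr (ENNReal.continuous_ofReal.comp_continuousOn hcont) heq
    exact (ENNReal.continuous_const_mul ENNReal.coe_ne_top).comp_continuousOn hbase
  -- conjunct 3
  have conj3 : ∀ (x : X) (α : ℝ≥0), (⨅ a' ∈ Act x, eta c q (w α) α x a') = ⊤ →
      {a ∈ Act x | eta c q (w α) α x a = ⨅ a' ∈ Act x, eta c q (w α) α x a'} = Act x := by
    intro x α htop
    ext a
    simp only [mem_sep_iff]
    refine ⟨fun h => h.1, fun ha => ⟨ha, le_antisymm ?_ (iInf₂_le a ha)⟩⟩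
    rw [htop]
    exact le_top
  -- conjunct 1
  have conj1 : ∀ (x : X) (α : ℝ≥0),
      {a ∈ Act x | eta c q (w α) α x a = ⨅ a' ∈ Act x, eta c q (w α) α x a'}.Nonempty := by
    intro x α
    by_cases htop : (⨅ a' ∈ Act x, eta c q (w α) α x a') = ⊤
    · rw [conj3 x α htop]
      exact hstrict x
    · obtain ⟨a, ha, hmin⟩ := exists_min_of_sup (hcK x) (hGn_cont x α) (hFeq x α) htop
      exact ⟨a, ha, hmin⟩
  -- conjunct 4
  have conj4 : ∀ (x : X) (α : ℝ≥0), (⨅ a' ∈ Act x, eta c q (w α) α x a') < ⊤ →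
      IsCompact {a ∈ Act x | eta c q (w α) α x a = ⨅ a' ∈ Act x, eta c q (w α) α x a'} := by
    intro x α hlt
    have hset : {a ∈ Act x | eta c q (w α) α x a = ⨅ a' ∈ Act x, eta c q (w α) α x a'}
        = {a | a ∈ Act x ∧ eta c q (w α) α x a ≤ ⨅ a' ∈ Act x, eta c q (w α) α x a'} := by
      ext a
      simp only [mem_sep_iff, mem_setOf_eq]
      exact ⟨fun ⟨h1, h2⟩ => ⟨h1, h2.le⟩, fun ⟨h1, h2⟩ => ⟨h1, le_antisymm h2 (iInf₂_le a h1)⟩⟩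
    rw [hset]
    exact (compact_sup_sublevel (hcK x) (hGn_cont x α) (hFeq x α) hlt.ne).1
  -- ===== measurability (conjunct 2) =====
  -- global measurable extension of the cost
  set cext : X × A → ℝ≥0∞ := fun p => if p.2 ∈ Act p.1 then c p.1 p.2 else ⊤ with hcext
  have hcext_meas : Measurable cext := by
    apply measurable_of_restrict_of_restrict_compl hGr
    · have h1 : {p : X × A | p.2 ∈ Act p.1}.restrict cext
          = {p : X × A | p.2 ∈ Act p.1}.restrict (fun p => c p.1 p.2) := by
        funext y
        simp only [Set.restrict_apply, hcext]
        exact if_pos y.2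
      change Measurable (Set.restrict _ cext)
      rw [h1]
      exact hc
    · have h2 : {p : X × A | p.2 ∈ Act p.1}ᶜ.restrict cext = fun _ => ⊤ := by
        funext y
        simp only [Set.restrict_apply, hcext]
        exact if_neg y.2
      change Measurable (Set.restrict _ cext)
      rw [h2]
      exact measurable_const
  have hcext_eq : ∀ (x : X) (a : A), a ∈ Act x → cext (x, a) = c x a := fun x a ha => if_pos ha
  -- the transition kernel, extended by the zero measure
  set QQ : X × A → Measure X := fun p => if p.2 ∈ Act p.1 then q p.1 p.2 else 0 with hQQdef
  have hQQ_meas : Measurable QQ := by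
    apply Measure.measurable_of_measurable_coe
    intro s hs
    apply measurable_of_restrict_of_restrict_compl hGr
    · have h1 : {p : X × A | p.2 ∈ Act p.1}.restrict (fun p => QQ p s)
          = {p : X × A | p.2 ∈ Act p.1}.restrict (fun p => q p.1 p.2 s) := by
        funext y
        simp only [Set.restrict_apply, Set.restrict, hQQdef]
        rw [if_pos (show ((y : X × A)).2 ∈ Act ((y : X × A)).1 from y.2)]
      change Measurable (Set.restrict _ (fun p => QQ p s))
      rw [h1]
      exact hqm s hs
    · have h2 : {p : X × A | p.2 ∈ Act p.1}ᶜ.restrict (fun p => QQ p s) = fun _ => 0 := by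
        funext y
        simp only [Set.restrict_apply, Set.restrict, hQQdef]
        rw [if_neg (show ¬ ((y : X × A)).2 ∈ Act ((y : X × A)).1 from y.2)]
        simp
      change Measurable (Set.restrict _ (fun p => QQ p s))
      rw [h2]
      exact measurable_const
  set κ : ProbabilityTheory.Kernel (X × ℝ≥0 × A) X :=
    ⟨fun p => QQ (p.1, p.2.2), hQQ_meas.comp (measurable_fst.prodMk measurable_snd.snd)⟩
    with hκdef
  have hκ_app : ∀ p : X × ℝ≥0 × A, κ p = QQ (p.1, p.2.2) := fun p => rfl
  haveI hκfin : ProbabilityTheory.IsFiniteKernel κ := by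
    constructor
    refine ⟨1, ENNReal.one_lt_top, fun p => ?_⟩
    rw [hκ_app]
    by_cases h : p.2.2 ∈ Act p.1
    · simp only [hQQdef]
      rw [if_pos h]
      haveI := hqp p.1 p.2.2 h
      rw [measure_univ]
    · simp only [hQQdef]
      rw [if_neg h]
      simp
  -- the global η
  set Nfun : X × ℝ≥0 × A → ℝ≥0∞ := fun p => ∫⁻ z, w p.2.1 z ∂ (κ p) with hNdef
  have hNf_meas : Measurable Nfun := by
    have hf : Measurable (fun y : (X × ℝ≥0 × A) × X => w y.1.2.1 y.2) :=
      hw_meas.comp (measurable_snd.prodMk measurable_fst.snd.fst)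
    exact Measurable.lintegral_kernel_prod_right' hf
  set etaG : X × ℝ≥0 × A → ℝ≥0∞ :=
    fun p => cext (p.1, p.2.2) + (p.2.1 : ℝ≥0∞) * Nfun p with hetaGdef
  have hetaG_meas : Measurable etaG :=
    Measurable.add (hcext_meas.comp (measurable_fst.prodMk measurable_snd.snd))
      (Measurable.mul (measurable_coe_nnreal_ennreal.comp measurable_snd.fst) hNf_meas)
  have hetaG_eq : ∀ (x : X) (α : ℝ≥0) (a : A), a ∈ Act x →
      etaG (x, α, a) = eta c q (w α) α x a := by
    intro x α a ha
    show cext (x, a) + (α : ℝ≥0∞) * Nfun (x, α, a) = c x a + (α : ℝ≥0∞) * ∫⁻ z, w α z ∂(q x a)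
    rw [hcext_eq x a ha]
    congr 2
    rw [hNdef]
    simp only
    rw [hκ_app]
    simp only [hQQdef]
    rw [if_pos ha]
  -- the value function
  set mv : X × ℝ≥0 → ℝ≥0∞ := fun t => ⨅ a ∈ Act t.1, eta c q (w t.2) t.2 t.1 a with hmvdef
  have hmv_meas : Measurable mv := by
    apply measurable_of_Iic
    intro r
    rcases eq_or_ne r ⊤ with rfl | hr
    · have huniv : mv ⁻¹' (Iic ⊤) = univ := by
        ext t
        simp
      rw [huniv]
      exact MeasurableSet.univ
    · set Br : Set ((X × ℝ≥0) × A) :=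
        {y | y.2 ∈ Act y.1.1 ∧ eta c q (w y.1.2) y.1.2 y.1.1 y.2 ≤ r} with hBrdef
      have hBr_meas : MeasurableSet Br := by
        have h1 : Br = (fun y : (X × ℝ≥0) × A => (y.1.1, y.2)) ⁻¹' {p : X × A | p.2 ∈ Act p.1}
            ∩ (fun y : (X × ℝ≥0) × A => etaG (y.1.1, y.1.2, y.2)) ⁻¹' (Iic r) := by
          ext y
          simp only [hBrdef, mem_inter_iff, mem_preimage, mem_setOf_eq, mem_Iic]
          constructor
          · rintro ⟨h1, h2⟩
            exact ⟨h1, by rwa [hetaG_eq _ _ _ h1]⟩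
          · rintro ⟨h1, h2⟩
            exact ⟨h1, by rwa [hetaG_eq _ _ _ h1] at h2⟩
        rw [h1]
        refine MeasurableSet.inter ?_ ?_
        · exact (measurable_fst.fst.prodMk measurable_snd) hGr
        · exact (hetaG_meas.comp
            (measurable_fst.fst.prodMk (measurable_fst.snd.prodMk measurable_snd)))
            measurableSet_Iic
      have hBr_sec : ∀ t : X × ℝ≥0, IsCompact {a : A | (t, a) ∈ Br} := by
        intro t
        have hseteq : {a : A | (t, a) ∈ Br}
            = {a | a ∈ Act t.1 ∧ eta c q (w t.2) t.2 t.1 a ≤ r} := rfl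
        rw [hseteq]
        exact (compact_sup_sublevel (hcK t.1) (hGn_cont t.1 t.2) (hFeq t.1 t.2) hr).1
      have hproj : mv ⁻¹' (Iic r) = Prod.fst '' Br := by
        ext t
        simp only [mem_preimage, mem_Iic, mem_image]
        constructor
        · intro hmr
          have hne : mv t ≠ ⊤ := fun h => hr (top_le_iff.1 (h ▸ hmr))
          obtain ⟨a, ha, hmin⟩ :=
            exists_min_of_sup (hcK t.1) (hGn_cont t.1 t.2) (hFeq t.1 t.2) hne
          exact ⟨(t, a), ⟨ha, le_trans (le_of_eq hmin) hmr⟩, rfl⟩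
        · rintro ⟨⟨t', a⟩, ⟨ha, hle⟩, rfl⟩
          exact le_trans (iInf₂_le a ha) hle
      rw [hproj]
      exact measurableSet_fst_image_of_isCompact_sections Br hBr_meas hBr_sec
  have conj2 : MeasurableSet {p : X × ℝ≥0 × A | p.2.2 ∈ Act p.1 ∧
      eta c q (w p.2.1) p.2.1 p.1 p.2.2 = ⨅ a' ∈ Act p.1, eta c q (w p.2.1) p.2.1 p.1 a'} := by
    have hseteq : {p : X × ℝ≥0 × A | p.2.2 ∈ Act p.1 ∧
        eta c q (w p.2.1) p.2.1 p.1 p.2.2 = ⨅ a' ∈ Act p.1, eta c q (w p.2.1) p.2.1 p.1 a'}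
        = (fun p : X × ℝ≥0 × A => (p.1, p.2.2)) ⁻¹' {p : X × A | p.2 ∈ Act p.1}
          ∩ {p : X × ℝ≥0 × A | etaG p = mv (p.1, p.2.1)} := by
      ext p
      simp only [mem_inter_iff, mem_preimage, mem_setOf_eq]
      constructor
      · rintro ⟨h1, h2⟩
        refine ⟨h1, ?_⟩
        have h3 := hetaG_eq p.1 p.2.1 p.2.2 h1
        rw [show ((p.1, p.2.1, p.2.2) : X × ℝ≥0 × A) = p from rfl] at h3
        rw [h3]
        exact h2
      · rintro ⟨h1, h2⟩
        refine ⟨h1, ?_⟩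
        have h3 := hetaG_eq p.1 p.2.1 p.2.2 h1
        rw [show ((p.1, p.2.1, p.2.2) : X × ℝ≥0 × A) = p from rfl] at h3
        rw [← h3]
        exact h2
    rw [hseteq]
    refine MeasurableSet.inter ((measurable_fst.prodMk measurable_snd.snd) hGr) ?_
    have hmcomp : Measurable (fun p : X × ℝ≥0 × A => mv (p.1, p.2.1)) :=
      hmv_meas.comp (measurable_fst.prodMk measurable_snd.fst)
    have hle1 : MeasurableSet {p : X × ℝ≥0 × A | etaG p ≤ mv (p.1, p.2.1)} :=
      measurableSet_le hetaG_meas hmcomp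
    have hle2 : MeasurableSet {p : X × ℝ≥0 × A | mv (p.1, p.2.1) ≤ etaG p} :=
      measurableSet_le hmcomp hetaG_meas
    have : {p : X × ℝ≥0 × A | etaG p = mv (p.1, p.2.1)}
        = {p | etaG p ≤ mv (p.1, p.2.1)} ∩ {p | mv (p.1, p.2.1) ≤ etaG p} := by
      ext p
      simp only [mem_inter_iff, mem_setOf_eq]
      exact ⟨fun h => ⟨h.le, h.ge⟩, fun h => le_antisymm h.1 h.2⟩
    rw [this]
    exact hle1.inter hle2
  exact ⟨conj1, conj2, conj3, conj4⟩
end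

section
/- For every β ∈ (0,1) and M > 0: g_{β,M}(α) ≤ 1 for each α ∈ (0,β] ∪ [δ_{β,M},1), and g_{β,M}(γ_{β,M}) ≥ M. -/
open Filter Topology

/-- `ε_β := 1 − β`. -/
noncomputable def epsP (β : ℝ) : ℝ := 1 - β

/-- `γ_{β,M} := max{(β+1)/2, 1 − ε_β/(3M)}`. -/
noncomputable def gammaP (β M : ℝ) : ℝ := max ((β + 1) / 2) (1 - epsP β / (3 * M))

/-- `n*_{β,M} := ⌊log_{γ_{β,M}}(min{1/2, M(1−γ_{β,M})/ε_β})⌋ + 1`. -/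
noncomputable def nStar (β M : ℝ) : ℕ :=
  (⌊Real.logb (gammaP β M) (min (1 / 2) (M * (1 - gammaP β M) / epsP β))⌋).toNat + 1

/-- `δ_{β,M} := max{(γ_{β,M}+1)/2, (1 − 1/(ε_β n*_{β,M}))^(1/n*_{β,M})}`. -/
noncomputable def deltaP (β M : ℝ) : ℝ :=
  max ((gammaP β M + 1) / 2)
    ((1 - 1 / (epsP β * (nStar β M : ℝ))) ^ ((1 : ℝ) / (nStar β M : ℝ)))

/-- `g_{β,M}(α) := ε_β (1 − α^{n*_{β,M}})² / (1 − α)`. -/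
noncomputable def gFun (β M α : ℝ) : ℝ := epsP β * (1 - α ^ nStar β M) ^ 2 / (1 - α)

/-- Bernoulli-type: `1 - α^n ≤ n (1 - α)` for `-1 ≤ α`. -/
lemma one_sub_pow_le_aux (α : ℝ) (hα : (-1:ℝ) ≤ α) (n : ℕ) :
    1 - α ^ n ≤ n * (1 - α) := by
  have h := one_add_mul_le_pow (a := α - 1) (by linarith) n
  have h' : 1 + (n:ℝ) * (α - 1) ≤ α ^ n := by simpa using h
  nlinarith

/-- Lemma 4.3: for every `β ∈ (0,1)` and `M > 0`, `g_{β,M}(α) ≤ 1` for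
each `α ∈ (0,β] ∪ [δ_{β,M},1)`, and `g_{β,M}(γ_{β,M}) ≥ M`. -/
theorem stmt16 (β M : ℝ) (hβ : β ∈ Set.Ioo (0 : ℝ) 1) (hM : 0 < M) :
    (∀ α, α ∈ Set.Ioc (0 : ℝ) β ∪ Set.Ico (deltaP β M) 1 → gFun β M α ≤ 1) ∧
    M ≤ gFun β M (gammaP β M) := by
  obtain ⟨hβ0, hβ1⟩ := hβ
  have hε : epsP β = 1 - β := rfl
  have hε0 : 0 < epsP β := by rw [hε]; linarith
  have hγβ : β < gammaP β M :=
    lt_of_lt_of_le (by linarith : β < (β+1)/2) (le_max_left _ _)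
  have hγ0 : 0 < gammaP β M := hβ0.trans hγβ
  have hγ1 : gammaP β M < 1 := by
    apply max_lt (by linarith)
    have : 0 < epsP β / (3 * M) := div_pos hε0 (by linarith)
    linarith
  have hγε : (1 - gammaP β M) * (3 * M) ≤ epsP β := by
    have h : 1 - epsP β / (3 * M) ≤ gammaP β M := le_max_right _ _
    have h2 : 1 - gammaP β M ≤ epsP β / (3 * M) := by linarith
    exact (le_div_iff₀ (by linarith : (0:ℝ) < 3 * M)).mp h2
  have hn1 : 1 ≤ nStar β M := Nat.le_add_left 1 _
  have hn0 : (0:ℝ) < (nStar β M : ℝ) := by exact_mod_cast hn1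
  have hnne : nStar β M ≠ 0 := Nat.one_le_iff_ne_zero.mp hn1
  -- the key bound γ^n ≤ min(1/2, M(1-γ)/ε)
  set m : ℝ := min (1 / 2) (M * (1 - gammaP β M) / epsP β) with hmdef
  have hm0 : 0 < m := lt_min (by norm_num) (div_pos (mul_pos hM (by linarith)) hε0)
  have hm13 : m ≤ 1 / 3 := by
    have h1 : m ≤ M * (1 - gammaP β M) / epsP β := min_le_right _ _
    have h2 : M * (1 - gammaP β M) / epsP β ≤ 1 / 3 := by
      rw [div_le_iff₀ hε0]; nlinarith
    linarith
  have hγnm : gammaP β M ^ nStar β M ≤ m := by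
    have hL : Real.logb (gammaP β M) m ≤ (nStar β M : ℝ) := by
      set L := Real.logb (gammaP β M) m with hLdef
      have h1 : L < (⌊L⌋ : ℝ) + 1 := Int.lt_floor_add_one _
      have h2 : ((⌊L⌋ : ℝ)) ≤ ((⌊L⌋.toNat : ℕ) : ℝ) := by exact_mod_cast Int.self_le_toNat _
      have h3 : (nStar β M : ℝ) = ((⌊L⌋.toNat : ℕ) : ℝ) + 1 := by
        rw [nStar, ← hmdef, ← hLdef]; push_cast; ring
      rw [h3]; linarith
    calc gammaP β M ^ nStar β M = gammaP β M ^ ((nStar β M : ℝ)) :=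
          (Real.rpow_natCast _ _).symm
      _ ≤ gammaP β M ^ Real.logb (gammaP β M) m :=
          Real.rpow_le_rpow_of_exponent_ge hγ0 hγ1.le hL
      _ = m := Real.rpow_logb hγ0 (ne_of_lt hγ1) hm0
  constructor
  · rintro α (⟨hα0, hαβ⟩ | ⟨hαδ, hα1⟩)
    · -- α ∈ (0, β]
      have hα1 : α < 1 := lt_of_le_of_lt hαβ hβ1
      have hαn0 : (0:ℝ) ≤ α ^ nStar β M := by positivity
      have hαn1 : α ^ nStar β M ≤ 1 := pow_le_one₀ hα0.le hα1.le
      rw [gFun, div_le_one (by linarith : (0:ℝ) < 1 - α)]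
      have hεα : epsP β ≤ 1 - α := by rw [hε]; linarith
      have hs1 : (1 - α ^ nStar β M) ^ 2 ≤ 1 := by nlinarith
      nlinarith [mul_le_mul_of_nonneg_left hs1 hε0.le]
    · -- α ∈ [δ, 1)
      have hαγ : (gammaP β M + 1) / 2 ≤ α := le_trans (le_max_left _ _) hαδ
      have hα0 : 0 < α := by linarith
      have hαn0 : (0:ℝ) ≤ α ^ nStar β M := by positivity
      have hαn1 : α ^ nStar β M ≤ 1 := pow_le_one₀ hα0.le hα1.le
      -- key: (1 - α^n)(ε n) ≤ 1
      have hkey : (1 - α ^ nStar β M) * (epsP β * (nStar β M : ℝ)) ≤ 1 := by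
        rcases le_or_gt (epsP β * (nStar β M : ℝ)) 1 with h | h
        · nlinarith
        · have hb0 : (0:ℝ) ≤ 1 - 1 / (epsP β * (nStar β M : ℝ)) := by
            have h1 : 1 / (epsP β * (nStar β M : ℝ)) ≤ 1 := by
              rw [div_le_one (by positivity)]; linarith
            linarith
          have hbα : (1 - 1 / (epsP β * (nStar β M : ℝ))) ^ ((1:ℝ) / (nStar β M : ℝ)) ≤ α :=
            le_trans (le_max_right _ _) hαδ
          have hpow : ((1 - 1 / (epsP β * (nStar β M : ℝ))) ^ ((1:ℝ) / (nStar β M : ℝ))) ^ nStar β M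
              = 1 - 1 / (epsP β * (nStar β M : ℝ)) := by
            rw [show (1:ℝ) / (nStar β M : ℝ) = ((nStar β M : ℝ))⁻¹ from one_div _]
            exact Real.rpow_inv_natCast_pow hb0 hnne
          have hαnb : 1 - 1 / (epsP β * (nStar β M : ℝ)) ≤ α ^ nStar β M := by
            rw [← hpow]
            exact pow_le_pow_left₀ (Real.rpow_nonneg hb0 _) hbα _
          have h1 : 1 - α ^ nStar β M ≤ 1 / (epsP β * (nStar β M : ℝ)) := by linarith
          calc (1 - α ^ nStar β M) * (epsP β * (nStar β M : ℝ))
              ≤ (1 / (epsP β * (nStar β M : ℝ))) * (epsP β * (nStar β M : ℝ)) :=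
                mul_le_mul_of_nonneg_right h1 (by positivity)
            _ = 1 := by field_simp
      have hber : 1 - α ^ nStar β M ≤ (nStar β M : ℝ) * (1 - α) :=
        one_sub_pow_le_aux α (by linarith) _
      rw [gFun, div_le_one (by linarith : (0:ℝ) < 1 - α)]
      calc epsP β * (1 - α ^ nStar β M) ^ 2
          = epsP β * (1 - α ^ nStar β M) * (1 - α ^ nStar β M) := by ring
        _ ≤ epsP β * (1 - α ^ nStar β M) * ((nStar β M : ℝ) * (1 - α)) :=
            mul_le_mul_of_nonneg_left hber (mul_nonneg hε0.le (by linarith))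
        _ = ((1 - α ^ nStar β M) * (epsP β * (nStar β M : ℝ))) * (1 - α) := by ring
        _ ≤ 1 * (1 - α) := mul_le_mul_of_nonneg_right hkey (by linarith)
        _ = 1 - α := one_mul _
  · rw [gFun, le_div_iff₀ (by linarith : (0:ℝ) < 1 - gammaP β M)]
    have h23 : 2/3 ≤ 1 - gammaP β M ^ nStar β M := by linarith
    have h49 : (4:ℝ)/9 ≤ (1 - gammaP β M ^ nStar β M) ^ 2 := by nlinarith
    have hA : epsP β * (4/9) ≤ epsP β * (1 - gammaP β M ^ nStar β M) ^ 2 :=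
      mul_le_mul_of_nonneg_left h49 hε0.le
    have hB : 0 ≤ M * (1 - gammaP β M) := mul_nonneg hM.le (by linarith)
    nlinarith
end

section
/- Let α^(1) ∈ [1/2,1) be arbitrary and for n = 1,2,… set ε^(n) := ε_{α^(n)}, γ^(n) := γ_{α^(n),n}, N(n) := n*_{α^(n),n}, and α^(n+1) := δ_{α^(n),n}. Then for every n = 1,2,…, 1 − 1/2^n ≤ α^(n) < γ^(n) < α^(n+1) < 1; consequently α^(n) → 1 and γ^(n) → 1 as n → ∞. -/
open Filter Topology

/-- The sequence `α^(1), α^(2), …` of the example: `α^(n+1) := δ_{α^(n), n}`; here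
`alphaSeq a1 n = α^(n+1)`, i.e. indices are shifted by one. -/
noncomputable def alphaSeq (a1 : ℝ) : ℕ → ℝ
  | 0 => a1
  | n + 1 => deltaP (alphaSeq a1 n) ((n : ℝ) + 1)

lemma key_step {β M : ℝ} (hβ : 1 / 2 ≤ β) (hβ1 : β < 1) (hM : 1 ≤ M) :
    β < gammaP β M ∧ gammaP β M < deltaP β M ∧ deltaP β M < 1 ∧
      1 - deltaP β M ≤ (1 - β) / 4 := by
  have hε : (0:ℝ) < 1 - β := by linarith
  have hM0 : (0:ℝ) < M := by linarith
  set γ := gammaP β M with hγdef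
  have hγ1 : (β + 1) / 2 ≤ γ := le_max_left _ _
  have hγ34 : (3:ℝ)/4 ≤ γ := le_trans (by linarith) hγ1
  have hγpos : (0:ℝ) < γ := by linarith
  have hγlt1 : γ < 1 := by
    apply max_lt (by linarith)
    have h0 : 0 < epsP β / (3 * M) := by
      apply div_pos
      · simpa [epsP] using hε
      · linarith
    linarith
  have hβγ : β < γ := lt_of_lt_of_le (by linarith) hγ1
  -- lower bound on log γ
  have hlogγ_neg : Real.log γ < 0 := Real.log_neg hγpos hγlt1
  have hinvγ : Real.log γ⁻¹ ≤ γ⁻¹ - 1 := Real.log_le_sub_one_of_pos (by positivity)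
  have hγinv_pos : 0 < γ⁻¹ := by positivity
  have hγγ : γ * γ⁻¹ = 1 := mul_inv_cancel₀ (ne_of_gt hγpos)
  have hlogγ_lb : -(2 * (1 - β) / 3) ≤ Real.log γ := by
    rw [Real.log_inv] at hinvγ
    have h1 : γ⁻¹ - 1 ≤ 2 * (1 - β) / 3 := by nlinarith
    linarith
  -- the min m
  set m := min (1 / 2 : ℝ) (M * (1 - γ) / epsP β) with hmdef
  have hm0 : 0 < m := by
    apply lt_min (by norm_num)
    apply div_pos (by nlinarith)
    simpa [epsP] using hε
  have hm2 : m ≤ 1 / 2 := min_le_left _ _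
  have hlogm : Real.log m ≤ -Real.log 2 := by
    have h1 : Real.log m ≤ Real.log (1 / 2) := Real.log_le_log hm0 hm2
    have h2 : Real.log ((1:ℝ) / 2) = -Real.log 2 := by
      rw [one_div, Real.log_inv]
    linarith
  have hlog2 : (2:ℝ)/3 < Real.log 2 := by
    have := Real.log_two_gt_d9; linarith
  set L := Real.logb γ m with hLdef
  have hL : 1 / (1 - β) ≤ L := by
    rw [hLdef, Real.logb, le_div_iff_of_neg hlogγ_neg]
    have hpos : (0:ℝ) < 1 / (1 - β) := by positivity
    have h3 : (1 / (1 - β)) * (-(2 * (1 - β) / 3)) ≤ (1 / (1 - β)) * Real.log γ :=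
      mul_le_mul_of_nonneg_left hlogγ_lb hpos.le
    have heq : (1 / (1 - β)) * (-(2 * (1 - β) / 3)) = -(2/3 : ℝ) := by
      field_simp
    rw [heq] at h3
    linarith
  have hL0 : 0 ≤ L := le_trans (by positivity) hL
  set N := nStar β M with hNdef
  have hNpos : 0 < N := Nat.succ_pos _
  have hNR : (0:ℝ) < (N:ℝ) := by exact_mod_cast hNpos
  have hNL : L < (N:ℝ) := by
    have hfloor : (0:ℤ) ≤ ⌊L⌋ := Int.floor_nonneg.mpr hL0
    have hNeq : (N:ℝ) = (⌊L⌋ : ℝ) + 1 := by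
      rw [hNdef, nStar, ← hγdef, ← hmdef, ← hLdef]
      have hc : ((⌊L⌋.toNat : ℕ) : ℝ) = (⌊L⌋ : ℝ) := by
        exact_mod_cast Int.toNat_of_nonneg hfloor
      push_cast
      rw [hc]
    rw [hNeq]
    exact Int.lt_floor_add_one L
  have hεN : 1 < (1 - β) * (N:ℝ) := by
    have h4 : 1 / (1 - β) < (N:ℝ) := lt_of_le_of_lt hL hNL
    calc (1:ℝ) = (1 - β) * (1 / (1 - β)) := by field_simp
    _ < (1 - β) * (N:ℝ) := by exact mul_lt_mul_of_pos_left h4 hε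
  have hεNpos : (0:ℝ) < (1 - β) * (N:ℝ) := by linarith
  have hb0 : (0:ℝ) ≤ 1 - 1 / ((1 - β) * (N:ℝ)) := by
    have h5 : 1 / ((1 - β) * (N:ℝ)) < 1 := by
      rw [div_lt_one hεNpos]; exact hεN
    linarith
  have hb1 : 1 - 1 / ((1 - β) * (N:ℝ)) < 1 := by
    have h6 : 0 < 1 / ((1 - β) * (N:ℝ)) := by positivity
    linarith
  have ht : (1 - 1 / (epsP β * (N:ℝ))) ^ ((1:ℝ) / (N:ℝ)) < 1 := by
    have hexp : (0:ℝ) < 1 / (N:ℝ) := by positivity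
    exact Real.rpow_lt_one (by simpa [epsP] using hb0) (by simpa [epsP] using hb1) hexp
  have hd1 : (γ + 1) / 2 ≤ deltaP β M := by
    rw [deltaP, ← hγdef, ← hNdef]; exact le_max_left _ _
  have hδlt1 : deltaP β M < 1 := by
    rw [deltaP, ← hγdef, ← hNdef]
    exact max_lt (by linarith) ht
  have hγδ : γ < deltaP β M := lt_of_lt_of_le (by linarith) hd1
  exact ⟨hβγ, hγδ, hδlt1, by linarith⟩

/-- with `α^(1) ∈ [1/2,1)` arbitrary, `ε^(n) := ε_{α^(n)}`,
`γ^(n) := γ_{α^(n),n}`, `N(n) := n*_{α^(n),n}`, `α^(n+1) := δ_{α^(n),n}`, one has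
`1 − 1/2^n ≤ α^(n) < γ^(n) < α^(n+1) < 1` for every `n ≥ 1`; consequently `α^(n) → 1`
and `γ^(n) → 1` as `n → ∞`.  (Here `alphaSeq a1 n = α^(n+1)`.) -/
theorem stmt17 (a1 : ℝ) (ha1 : a1 ∈ Set.Ico (1 / 2 : ℝ) 1) :
    (∀ n : ℕ,
      1 - 1 / 2 ^ (n + 1) ≤ alphaSeq a1 n ∧
      alphaSeq a1 n < gammaP (alphaSeq a1 n) ((n : ℝ) + 1) ∧
      gammaP (alphaSeq a1 n) ((n : ℝ) + 1) < alphaSeq a1 (n + 1) ∧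
      alphaSeq a1 (n + 1) < 1) ∧
    Tendsto (alphaSeq a1) atTop (𝓝 1) ∧
    Tendsto (fun n : ℕ => gammaP (alphaSeq a1 n) ((n : ℝ) + 1)) atTop (𝓝 1) := by
  obtain ⟨ha, hb⟩ := ha1
  have inv : ∀ n, 1 - 1 / 2 ^ (n + 1) ≤ alphaSeq a1 n ∧ alphaSeq a1 n < 1 := by
    intro n
    induction n with
    | zero =>
      constructor
      · show (1:ℝ) - 1 / 2 ^ (0 + 1) ≤ a1
        norm_num
        linarith
      · exact hb
    | succ n ih =>
      obtain ⟨h1, h2⟩ := ih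
      have hp : (0:ℝ) < 2 ^ (n + 1) := by positivity
      have hhalf : (1:ℝ) / 2 ≤ alphaSeq a1 n := by
        have h3 : (1:ℝ) / 2 ^ (n + 1) ≤ 1 / 2 := by
          apply div_le_div_of_nonneg_left (by norm_num) (by norm_num)
          calc (2:ℝ) = 2 ^ 1 := by norm_num
          _ ≤ 2 ^ (n + 1) := by
            apply pow_le_pow_right₀ (by norm_num) (by omega)
        linarith
      have hM : (1:ℝ) ≤ (n:ℝ) + 1 := by
        have := Nat.cast_nonneg (α := ℝ) n; linarith
      obtain ⟨k1, k2, k3, k4⟩ := key_step hhalf h2 hM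
      have heq : alphaSeq a1 (n + 1) = deltaP (alphaSeq a1 n) ((n:ℝ) + 1) := rfl
      rw [heq]
      refine ⟨?_, k3⟩
      have ht : (1:ℝ) / 2 ^ (n + 1 + 1) = (1 / 2 ^ (n + 1)) / 2 := by
        rw [pow_succ, ← div_div]
      rw [ht]
      linarith
  have bullets : ∀ n : ℕ,
      1 - 1 / 2 ^ (n + 1) ≤ alphaSeq a1 n ∧
      alphaSeq a1 n < gammaP (alphaSeq a1 n) ((n : ℝ) + 1) ∧
      gammaP (alphaSeq a1 n) ((n : ℝ) + 1) < alphaSeq a1 (n + 1) ∧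
      alphaSeq a1 (n + 1) < 1 := by
    intro n
    obtain ⟨h1, h2⟩ := inv n
    have hp : (0:ℝ) < 2 ^ (n + 1) := by positivity
    have hhalf : (1:ℝ) / 2 ≤ alphaSeq a1 n := by
      have h3 : (1:ℝ) / 2 ^ (n + 1) ≤ 1 / 2 := by
        apply div_le_div_of_nonneg_left (by norm_num) (by norm_num)
        calc (2:ℝ) = 2 ^ 1 := by norm_num
        _ ≤ 2 ^ (n + 1) := by
          apply pow_le_pow_right₀ (by norm_num) (by omega)
      linarith
    have hM : (1:ℝ) ≤ (n:ℝ) + 1 := by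
      have := Nat.cast_nonneg (α := ℝ) n; linarith
    obtain ⟨k1, k2, k3, k4⟩ := key_step hhalf h2 hM
    exact ⟨h1, k1, k2, k3⟩
  have hlow : Tendsto (fun n : ℕ => (1 - 1 / 2 ^ (n + 1) : ℝ)) atTop (𝓝 1) := by
    have h0 : Tendsto (fun n : ℕ => ((1:ℝ) / 2) ^ n) atTop (𝓝 0) :=
      tendsto_pow_atTop_nhds_zero_of_lt_one (by norm_num) (by norm_num)
    have h1 : Tendsto (fun n : ℕ => ((1:ℝ) / 2) ^ (n + 1)) atTop (𝓝 0) :=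
      h0.comp (tendsto_add_atTop_nat 1)
    have h2 : Tendsto (fun n : ℕ => (1 - (1 / 2 : ℝ) ^ (n + 1))) atTop (𝓝 (1 - 0)) :=
      tendsto_const_nhds.sub h1
    simpa [one_div, inv_pow] using h2
  refine ⟨bullets, ?_, ?_⟩
  · refine tendsto_of_tendsto_of_tendsto_of_le_of_le hlow tendsto_const_nhds
      (fun n => (bullets n).1) (fun n => (inv n).2.le)
  · refine tendsto_of_tendsto_of_tendsto_of_le_of_le hlow tendsto_const_nhds
      (fun n => le_of_lt (lt_of_le_of_lt (bullets n).1 (bullets n).2.1))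
      (fun n => le_of_lt (lt_trans (bullets n).2.2.1 (bullets n).2.2.2))
end

section
/- In the example chain, for every α ∈ (0,1): v_α(0) = 1/(1−α); v_α(n,k) = 1/(1−α) + ε^(n)·[(1−α^{N(n)})·α^{N(n)−k+1} − (1−α^{N(n)−k+1})]/(1−α) for k = 1,…,N(n); v_α(n,k) = 1/(1−α) + ε^(n)·(1−α^{2N(n)−k+1})/(1−α) for k = N(n)+1,…,2N(n); moreover v_α(n,1) ≤ v_α(n,k) for k = 1,…,N(n), v_α(n,1) < v_α(0) < v_α(n,N(n)+k) for k = 1,…,N(n), and m_α := inf over all states of v_α equals 1/(1−α) − sup_{n≥1} ε^(n)·(1−α^{N(n)})²/(1−α). -/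
open Filter Topology

/-- `N(n) := n*_{α^(n), n}` of the example (meaningful for `n ≥ 1`). -/
noncomputable def Nex (a1 : ℝ) (n : ℕ) : ℕ := nStar (alphaSeq a1 (n - 1)) (n : ℝ)

/-- `ε^(n) := ε_{α^(n)} = 1 − α^(n)` of the example (meaningful for `n ≥ 1`). -/
noncomputable def epsEx (a1 : ℝ) (n : ℕ) : ℝ := epsP (alphaSeq a1 (n - 1))

/-- The deterministic transitions of the example chain: `0 → 0`,
`(n,k) → (n,k+1)` for `k < 2N(n)`, and `(n,2N(n)) → 0`; the state `0` is `none`. -/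
noncomputable def stepEx (a1 : ℝ) : Option (ℕ × ℕ) → Option (ℕ × ℕ)
  | none => none
  | some (n, k) => if k < 2 * Nex a1 n then some (n, k + 1) else none

/-- The one-step costs of the example chain: `c(0) = 1`, `c(n,k) = 1 − ε^(n)` for
`k ≤ N(n)` and `c(n,k) = 1 + ε^(n)` for `N(n) < k ≤ 2N(n)`. -/
noncomputable def costEx (a1 : ℝ) : Option (ℕ × ℕ) → ℝ
  | none => 1
  | some (n, k) => if k ≤ Nex a1 n then 1 - epsEx a1 n else 1 + epsEx a1 n

/-- `v_α(x) := Σ_{t≥0} α^t c(x_t)`, the discounted value of the example chain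
started at `x`. -/
noncomputable def vEx (a1 α : ℝ) (x : Option (ℕ × ℕ)) : ℝ :=
  ∑' t : ℕ, α ^ t * costEx a1 ((stepEx a1)^[t] x)

/-- The genuine states of the example chain:
`{0} ∪ {(n,k) : n ≥ 1, 1 ≤ k ≤ 2N(n)}`. -/
def validEx (a1 : ℝ) : Set (Option (ℕ × ℕ)) :=
  {none} ∪ {s | ∃ n k : ℕ, 1 ≤ n ∧ 1 ≤ k ∧ k ≤ 2 * Nex a1 n ∧ s = some (n, k)}

/-- `m_α := inf_{x ∈ X} v_α(x)` over the states of the example chain. -/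
noncomputable def mEx (a1 α : ℝ) : ℝ := sInf (vEx a1 α '' validEx a1)

lemma gamma_lt_one' {β M : ℝ} (hβ1 : 1/2 ≤ β) (hβ2 : β < 1) (hM : 1 ≤ M) :
    3/4 ≤ gammaP β M ∧ gammaP β M < 1 := by
  have hε : 0 < epsP β := by simp [epsP]; linarith
  constructor
  · calc (3/4 : ℝ) ≤ (β+1)/2 := by linarith
    _ ≤ _ := le_max_left _ _
  · apply max_lt (by linarith)
    have : 0 < epsP β / (3*M) := div_pos hε (by linarith)
    linarith

lemma eps_nStar' {β M : ℝ} (hβ1 : 1/2 ≤ β) (hβ2 : β < 1) (hM : 1 ≤ M) :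
    3/2 ≤ epsP β * (nStar β M : ℝ) := by
  have hε : 0 < epsP β := by simp [epsP]; linarith
  have hε2 : epsP β ≤ 1/2 := by simp [epsP]; linarith
  obtain ⟨hγ34, hγ1⟩ := gamma_lt_one' hβ1 hβ2 hM
  set γ := gammaP β M with hγdef
  have hγ0 : (0:ℝ) < γ := by linarith
  set m := min (1/2 : ℝ) (M * (1 - γ) / epsP β) with hm
  have hm0 : 0 < m := lt_min (by norm_num) (div_pos (mul_pos (by linarith) (by linarith)) hε)
  have hm12 : m ≤ 1/2 := min_le_left _ _
  set x := Real.logb γ m with hx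
  set ns := nStar β M with hns
  have hxn : x ≤ (ns : ℝ) := by
    have h1 : (⌊x⌋ : ℝ) ≤ (⌊x⌋.toNat : ℝ) := by exact_mod_cast Int.self_le_toNat _
    have h2 : x ≤ ⌊x⌋ + 1 := le_of_lt (Int.lt_floor_add_one x)
    have : (ns : ℝ) = (⌊x⌋.toNat : ℝ) + 1 := by rw [hns, nStar]; push_cast; rw [← hγdef, ← hm, ← hx]
    linarith
  have hpow : γ ^ ns ≤ 1/2 := by
    have h1 : γ ^ (ns : ℝ) ≤ γ ^ x := Real.rpow_le_rpow_of_exponent_ge hγ0 (le_of_lt hγ1) hxn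
    have h2 : γ ^ x = m := Real.rpow_logb hγ0 (ne_of_lt hγ1) hm0
    have h3 : γ ^ (ns : ℝ) = γ ^ ns := Real.rpow_natCast γ ns
    linarith [h3 ▸ h1, h2 ▸ h1]
  have hγlb : 1 - epsP β / (3*M) ≤ γ := le_max_right _ _
  have hMpos : (0:ℝ) < M := by linarith
  have hb0 : (0:ℝ) ≤ 1 - epsP β / (3*M) := by
    have : epsP β / (3*M) ≤ epsP β := by
      rw [div_le_iff₀ (by linarith : (0:ℝ) < 3*M)]; nlinarith
    linarith
  have hbern : 1 + (ns:ℝ) * (-(epsP β / (3*M))) ≤ (1 - epsP β / (3*M)) ^ ns := by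
    have := one_add_mul_le_pow (a := -(epsP β / (3*M)))
      (by nlinarith [div_pos hε (show (0:ℝ) < 3*M by linarith)]) ns
    rw [sub_eq_add_neg]; exact this
  have hmono : (1 - epsP β / (3*M)) ^ ns ≤ γ ^ ns := pow_le_pow_left₀ hb0 hγlb ns
  have : 1 - (ns:ℝ) * (epsP β / (3*M)) ≤ 1/2 := by nlinarith
  have h32 : (ns:ℝ) * epsP β ≥ 3*M/2 := by
    have h3M : (0:ℝ) < 3*M := by linarith
    have key : 1/2 ≤ (ns:ℝ) * (epsP β / (3*M)) := by linarith
    have hid : (ns:ℝ) * epsP β = ((ns:ℝ) * (epsP β / (3*M))) * (3*M) := by field_simp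
    nlinarith [mul_le_mul_of_nonneg_right key h3M.le]
  nlinarith

lemma delta_mem' {β M : ℝ} (hβ1 : 1/2 ≤ β) (hβ2 : β < 1) (hM : 1 ≤ M) :
    1/2 ≤ deltaP β M ∧ deltaP β M < 1 := by
  obtain ⟨hγ34, hγ1⟩ := gamma_lt_one' hβ1 hβ2 hM
  have hεn := eps_nStar' hβ1 hβ2 hM
  have hε : 0 < epsP β := by simp [epsP]; linarith
  have hns0 : (0:ℝ) < (nStar β M : ℝ) := by exact_mod_cast Nat.succ_pos _
  have hb1 : 1 / (epsP β * (nStar β M : ℝ)) ≤ 2/3 := by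
    rw [div_le_iff₀ (by linarith)]; linarith
  have hb0 : 0 < 1 / (epsP β * (nStar β M : ℝ)) := by positivity
  constructor
  · calc (1/2:ℝ) ≤ (gammaP β M + 1)/2 := by linarith
    _ ≤ _ := le_max_left _ _
  · apply max_lt (by linarith)
    apply Real.rpow_lt_one (by linarith) (by linarith) (by positivity)

lemma alphaSeq_mem' {a1 : ℝ} (ha1 : a1 ∈ Set.Ico (1/2:ℝ) 1) (n : ℕ) :
    alphaSeq a1 n ∈ Set.Ico (1/2:ℝ) 1 := by
  induction n with
  | zero => exact ha1
  | succ n ih =>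
    have h := delta_mem' (β := alphaSeq a1 n) (M := (n:ℝ)+1) ih.1 ih.2
      (by have : (0:ℝ) ≤ (n:ℝ) := Nat.cast_nonneg n; linarith)
    exact ⟨h.1, h.2⟩

/-- computation (14)–(15): in the example chain, for every `α ∈ (0,1)`:
`v_α(0) = 1/(1−α)`; the displayed closed forms for `v_α(n,k)` hold; `v_α(n,1) ≤ v_α(n,k)`
for `k = 1,…,N(n)`; `v_α(n,1) < v_α(0) < v_α(n,N(n)+k)` for `k = 1,…,N(n)`; and
`m_α = 1/(1−α) − sup_{n≥1} ε^(n)(1−α^{N(n)})²/(1−α)`. -/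
theorem stmt18 (a1 : ℝ) (ha1 : a1 ∈ Set.Ico (1 / 2 : ℝ) 1)
    (α : ℝ) (hα : α ∈ Set.Ioo (0 : ℝ) 1) :
    vEx a1 α none = 1 / (1 - α) ∧
    (∀ n k : ℕ, 1 ≤ n → 1 ≤ k → k ≤ Nex a1 n →
      vEx a1 α (some (n, k)) = 1 / (1 - α) +
        epsEx a1 n * ((1 - α ^ Nex a1 n) * α ^ (Nex a1 n - k + 1) -
          (1 - α ^ (Nex a1 n - k + 1))) / (1 - α)) ∧
    (∀ n k : ℕ, 1 ≤ n → Nex a1 n + 1 ≤ k → k ≤ 2 * Nex a1 n →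
      vEx a1 α (some (n, k)) = 1 / (1 - α) +
        epsEx a1 n * (1 - α ^ (2 * Nex a1 n - k + 1)) / (1 - α)) ∧
    (∀ n k : ℕ, 1 ≤ n → 1 ≤ k → k ≤ Nex a1 n →
      vEx a1 α (some (n, 1)) ≤ vEx a1 α (some (n, k))) ∧
    (∀ n k : ℕ, 1 ≤ n → 1 ≤ k → k ≤ Nex a1 n →
      vEx a1 α (some (n, 1)) < vEx a1 α none ∧
      vEx a1 α none < vEx a1 α (some (n, Nex a1 n + k))) ∧
    mEx a1 α = 1 / (1 - α) -
      ⨆ n : {m : ℕ // 1 ≤ m}, epsEx a1 (n : ℕ) * (1 - α ^ Nex a1 (n : ℕ)) ^ 2 / (1 - α) := by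

  obtain ⟨hα0, hα1⟩ := hα
  have h1α : 0 < 1 - α := by linarith
  have hεmem : ∀ n : ℕ, 0 < epsEx a1 n ∧ epsEx a1 n ≤ 1/2 := by
    intro n
    have h := alphaSeq_mem' ha1 (n-1)
    constructor
    · simp only [epsEx, epsP]; linarith [h.2]
    · simp only [epsEx, epsP]; linarith [h.1]
  have hN1 : ∀ n : ℕ, 1 ≤ Nex a1 n := by
    intro n; unfold Nex nStar; omega
  have hcost : ∀ x, 1/2 ≤ costEx a1 x ∧ costEx a1 x ≤ 3/2 := by
    intro x
    match x with
    | none => constructor <;> norm_num [costEx]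
    | some (n, k) =>
      obtain ⟨he1, he2⟩ := hεmem n
      simp only [costEx]
      split <;> constructor <;> linarith
  have hsumm : ∀ x, Summable (fun t : ℕ => α ^ t * costEx a1 ((stepEx a1)^[t] x)) := by
    intro x
    apply Summable.of_nonneg_of_le
      (fun t => mul_nonneg (pow_nonneg hα0.le t)
        (by linarith [(hcost ((stepEx a1)^[t] x)).1]))
      (fun t => ?_)
      ((summable_geometric_of_lt_one hα0.le hα1).mul_right (3/2))
    exact mul_le_mul_of_nonneg_left (hcost _).2 (pow_nonneg hα0.le t)
  have hrec : ∀ x, vEx a1 α x = costEx a1 x + α * vEx a1 α (stepEx a1 x) := by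
    intro x
    rw [vEx, Summable.tsum_eq_zero_add (hsumm x)]
    congr 1
    · simp
    · rw [vEx, ← tsum_mul_left]
      apply tsum_congr
      intro t
      rw [Function.iterate_succ_apply, pow_succ]
      ring
  have hv0 : vEx a1 α none = 1/(1-α) := by
    rw [vEx]
    have hfix : ∀ t : ℕ, (stepEx a1)^[t] (none : Option (ℕ × ℕ)) = none :=
      fun t => Function.iterate_fixed rfl t
    simp only [hfix]
    have : ∀ t : ℕ, α ^ t * costEx a1 none = α ^ t := by
      intro t; simp [costEx]
    simp only [this]
    rw [tsum_geometric_of_lt_one hα0.le hα1, one_div]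
  have hstep_lt : ∀ n k : ℕ, k < 2 * Nex a1 n → stepEx a1 (some (n,k)) = some (n, k+1) := by
    intro n k hk; simp only [stepEx]; rw [if_pos hk]
  have hstep_end : ∀ n : ℕ, stepEx a1 (some (n, 2 * Nex a1 n)) = none := by
    intro n; simp only [stepEx]; rw [if_neg (by omega)]
  have hcost_lo : ∀ n k : ℕ, k ≤ Nex a1 n → costEx a1 (some (n,k)) = 1 - epsEx a1 n := by
    intro n k hk; simp only [costEx]; rw [if_pos hk]
  have hcost_hi : ∀ n k : ℕ, Nex a1 n < k → costEx a1 (some (n,k)) = 1 + epsEx a1 n := by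
    intro n k hk; simp only [costEx]; rw [if_neg (by omega)]
  have hL2 : ∀ n j : ℕ, j < Nex a1 n →
      vEx a1 α (some (n, 2 * Nex a1 n - j)) =
        1/(1-α) + epsEx a1 n * (1 - α ^ (j+1)) / (1-α) := by
    intro n j
    induction j with
    | zero =>
      intro _
      have hN := hN1 n
      simp only [Nat.sub_zero]
      rw [hrec, hstep_end n, hv0, hcost_hi n _ (by omega)]
      field_simp
      ring
    | succ j ih =>
      intro hj
      have hN := hN1 n
      rw [hrec, hstep_lt _ _ (by omega),
        show 2 * Nex a1 n - (j+1) + 1 = 2 * Nex a1 n - j by omega,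
        ih (by omega), hcost_hi _ _ (by omega)]
      field_simp
      ring
  have hL1 : ∀ n j : ℕ, j < Nex a1 n →
      vEx a1 α (some (n, Nex a1 n - j)) = 1/(1-α)
        + epsEx a1 n * ((1 - α ^ Nex a1 n) * α ^ (j+1) - (1 - α ^ (j+1))) / (1-α) := by
    intro n j
    induction j with
    | zero =>
      intro _
      have hN := hN1 n
      have h2 := hL2 n (Nex a1 n - 1) (by omega)
      rw [show 2 * Nex a1 n - (Nex a1 n - 1) = Nex a1 n + 1 by omega,
          show Nex a1 n - 1 + 1 = Nex a1 n by omega] at h2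
      simp only [Nat.sub_zero]
      rw [hrec, hstep_lt _ _ (by omega), h2, hcost_lo _ _ le_rfl]
      field_simp
      ring
    | succ j ih =>
      intro hj
      have hN := hN1 n
      rw [hrec, hstep_lt _ _ (by omega),
        show Nex a1 n - (j+1) + 1 = Nex a1 n - j by omega,
        ih (by omega), hcost_lo _ _ (by omega)]
      field_simp
      ring
  have part2 : ∀ n k : ℕ, 1 ≤ n → 1 ≤ k → k ≤ Nex a1 n →
      vEx a1 α (some (n, k)) = 1 / (1 - α) +
        epsEx a1 n * ((1 - α ^ Nex a1 n) * α ^ (Nex a1 n - k + 1) -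
          (1 - α ^ (Nex a1 n - k + 1))) / (1 - α) := by
    intro n k _ hk1 hk2
    have h := hL1 n (Nex a1 n - k) (by omega)
    rw [show Nex a1 n - (Nex a1 n - k) = k by omega,
        show Nex a1 n - k + 1 = Nex a1 n - k + 1 from rfl] at h
    exact h
  have part3 : ∀ n k : ℕ, 1 ≤ n → Nex a1 n + 1 ≤ k → k ≤ 2 * Nex a1 n →
      vEx a1 α (some (n, k)) = 1 / (1 - α) +
        epsEx a1 n * (1 - α ^ (2 * Nex a1 n - k + 1)) / (1 - α) := by
    intro n k _ hk1 hk2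
    have h := hL2 n (2 * Nex a1 n - k) (by have := hN1 n; omega)
    rw [show 2 * Nex a1 n - (2 * Nex a1 n - k) = k by omega] at h
    exact h
  have part4 : ∀ n k : ℕ, 1 ≤ n → 1 ≤ k → k ≤ Nex a1 n →
      vEx a1 α (some (n, 1)) ≤ vEx a1 α (some (n, k)) := by
    intro n k hn hk1 hk2
    have hN := hN1 n
    rw [part2 n 1 hn le_rfl hN, part2 n k hn hk1 hk2,
      show Nex a1 n - 1 + 1 = Nex a1 n by omega]
    obtain ⟨hε1, hε2⟩ := hεmem n
    have hrN : Nex a1 n - k + 1 ≤ Nex a1 n := by omega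
    have h1 : α ^ Nex a1 n ≤ α ^ (Nex a1 n - k + 1) :=
      pow_le_pow_of_le_one hα0.le hα1.le hrN
    have h2 : α ^ (Nex a1 n - k + 1) ≤ 1 := pow_le_one₀ hα0.le hα1.le
    have h3 : (0:ℝ) ≤ α ^ Nex a1 n := pow_nonneg hα0.le _
    apply add_le_add_right
    rw [div_le_div_iff₀ h1α h1α]
    nlinarith [mul_nonneg (mul_nonneg (mul_nonneg hε1.le h1α.le)
      (sub_nonneg.mpr h1)) (by linarith : (0:ℝ) ≤ 2 - α ^ Nex a1 n)]
  have part5 : ∀ n k : ℕ, 1 ≤ n → 1 ≤ k → k ≤ Nex a1 n →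
      vEx a1 α (some (n, 1)) < vEx a1 α none ∧
      vEx a1 α none < vEx a1 α (some (n, Nex a1 n + k)) := by
    intro n k hn hk1 hk2
    have hN := hN1 n
    obtain ⟨hε1, hε2⟩ := hεmem n
    constructor
    · rw [part2 n 1 hn le_rfl hN, hv0, show Nex a1 n - 1 + 1 = Nex a1 n by omega]
      have ha : α ^ Nex a1 n < 1 := pow_lt_one₀ hα0.le hα1 (by omega)
      have key : epsEx a1 n * ((1 - α ^ Nex a1 n) * α ^ Nex a1 n - (1 - α ^ Nex a1 n)) < 0 := by
        nlinarith [mul_pos hε1 (mul_pos (sub_pos.mpr ha) (sub_pos.mpr ha))]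
      have := div_neg_of_neg_of_pos key h1α
      linarith
    · rw [part3 n (Nex a1 n + k) hn (by omega) (by omega), hv0]
      have ha : α ^ (2 * Nex a1 n - (Nex a1 n + k) + 1) < 1 :=
        pow_lt_one₀ hα0.le hα1 (by omega)
      have hpos : 0 < epsEx a1 n * (1 - α ^ (2 * Nex a1 n - (Nex a1 n + k) + 1)) / (1-α) :=
        div_pos (mul_pos hε1 (by linarith)) h1α
      linarith
  have hv1 : ∀ n : ℕ, 1 ≤ n → vEx a1 α (some (n, 1)) =
      1/(1-α) - epsEx a1 n * (1 - α ^ Nex a1 n)^2 / (1-α) := by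
    intro n hn
    have hN := hN1 n
    rw [part2 n 1 hn le_rfl hN, show Nex a1 n - 1 + 1 = Nex a1 n by omega]
    field_simp
    ring
  refine ⟨hv0, part2, part3, part4, part5, ?_⟩
  -- part 6
  haveI : Nonempty {m : ℕ // 1 ≤ m} := ⟨⟨1, le_rfl⟩⟩
  have hGpos : ∀ n : ℕ, 0 < epsEx a1 n * (1 - α ^ Nex a1 n)^2 / (1-α) := by
    intro n
    have ha : α ^ Nex a1 n < 1 := pow_lt_one₀ hα0.le hα1 (by have := hN1 n; omega)
    exact div_pos (mul_pos (hεmem n).1 (by nlinarith)) h1α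
  have hGle : ∀ n : ℕ, epsEx a1 n * (1 - α ^ Nex a1 n)^2 / (1-α) ≤ 1/(1-α) := by
    intro n
    obtain ⟨hε1, hε2⟩ := hεmem n
    have h2 : α ^ Nex a1 n ≤ 1 := pow_le_one₀ hα0.le hα1.le
    have h3 : (0:ℝ) ≤ α ^ Nex a1 n := pow_nonneg hα0.le _
    have h4 : (1 - α ^ Nex a1 n)^2 ≤ 1 := by nlinarith
    rw [div_le_div_iff₀ h1α h1α]
    nlinarith [mul_le_mul hε2 h4 (sq_nonneg (1 - α ^ Nex a1 n)) (by norm_num : (0:ℝ) ≤ 1/2)]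
  have hbdd : BddAbove (Set.range
      (fun n : {m : ℕ // 1 ≤ m} => epsEx a1 (n : ℕ) * (1 - α ^ Nex a1 (n : ℕ))^2 / (1-α))) := by
    refine ⟨1/(1-α), ?_⟩
    rintro y ⟨n, rfl⟩
    exact hGle n
  set sup := ⨆ n : {m : ℕ // 1 ≤ m}, epsEx a1 (n : ℕ) * (1 - α ^ Nex a1 (n : ℕ)) ^ 2 / (1 - α)
    with hsupdef
  have hGsup : ∀ n : ℕ, 1 ≤ n → epsEx a1 n * (1 - α ^ Nex a1 n)^2 / (1-α) ≤ sup := by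
    intro n hn
    exact le_ciSup hbdd ⟨n, hn⟩
  have hsup0 : 0 < sup := lt_of_lt_of_le (hGpos 1) (hGsup 1 le_rfl)
  have hmem1 : ∀ n : ℕ, 1 ≤ n → vEx a1 α (some (n, 1)) ∈ vEx a1 α '' validEx a1 := by
    intro n hn
    exact ⟨some (n, 1), Or.inr ⟨n, 1, hn, le_rfl, by have := hN1 n; omega, rfl⟩, rfl⟩
  have hmem0 : vEx a1 α none ∈ vEx a1 α '' validEx a1 := ⟨none, Or.inl rfl, rfl⟩
  have hlb : ∀ y ∈ vEx a1 α '' validEx a1, 1/(1-α) - sup ≤ y := by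
    rintro y ⟨x, hx, rfl⟩
    rcases hx with hx | ⟨n, k, hn, hk1, hk2, rfl⟩
    · rw [Set.mem_singleton_iff] at hx
      subst hx
      rw [hv0]; linarith
    · by_cases hk : k ≤ Nex a1 n
      · have h4 := part4 n k hn hk1 hk
        rw [hv1 n hn] at h4
        linarith [hGsup n hn]
      · have h5 := (part5 n (k - Nex a1 n) hn (by omega) (by omega)).2
        rw [show Nex a1 n + (k - Nex a1 n) = k by omega, hv0] at h5
        linarith
  have hbddS : BddBelow (vEx a1 α '' validEx a1) := ⟨1/(1-α) - sup, hlb⟩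
  have hle : sInf (vEx a1 α '' validEx a1) ≤ 1/(1-α) - sup := by
    have h1 : ∀ n : {m : ℕ // 1 ≤ m},
        epsEx a1 (n : ℕ) * (1 - α ^ Nex a1 (n : ℕ)) ^ 2 / (1 - α) ≤
          1/(1-α) - sInf (vEx a1 α '' validEx a1) := by
      rintro ⟨n, hn⟩
      have h2 : sInf (vEx a1 α '' validEx a1) ≤ vEx a1 α (some (n, 1)) :=
        csInf_le hbddS (hmem1 n hn)
      rw [hv1 n hn] at h2
      linarith
    have h3 := ciSup_le h1
    rw [← hsupdef] at h3
    linarith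
  have hge : 1/(1-α) - sup ≤ sInf (vEx a1 α '' validEx a1) := le_csInf ⟨_, hmem0⟩ hlb
  rw [mEx]
  linarith
end
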